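/- arXiv:1606.08373 — 9 statements merged into one kernel-verified Lean document; each statement's English description precedes it below -/
import Mathlib

section
/- Let Y be a non-negative random variable with E[Y] = 1, and let c > 0. Then 1/(E[Y^2] + c) ≤ E[min(1, Y/c)] ≤ min(1, 1/c). -/
open MeasureTheory ProbabilityTheory ENNReal

/-- Let `Y` be a non-negative random variable with `E[Y] = 1`, and let `c > 0`. Then
`1/(E[Y²] + c) ≤ E[min(1, Y/c)] ≤ min(1, 1/c)`, where the second moment `E[Y²]` may be
infinite (in which case the lower bound is `0`), so it is expressed as a lower Lebesgue
integral in `ℝ≥0∞`. -/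
theorem stmt0 {Ω : Type*} [MeasurableSpace Ω] (P : Measure Ω) [IsProbabilityMeasure P]
    (Y : Ω → ℝ) (hYm : Measurable Y) (hY0 : ∀ ω, 0 ≤ Y ω)
    (hYint : Integrable Y P) (hY1 : ∫ ω, Y ω ∂P = 1) (c : ℝ) (hc : 0 < c) :
    (∫⁻ ω, ENNReal.ofReal ((Y ω) ^ 2) ∂P + ENNReal.ofReal c)⁻¹
        ≤ ENNReal.ofReal (∫ ω, min 1 (Y ω / c) ∂P) ∧
      ∫ ω, min 1 (Y ω / c) ∂P ≤ min 1 (1 / c) := by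
  set a : Ω → ℝ≥0∞ := fun ω => ENNReal.ofReal (Y ω) with ha_def
  set c' : ℝ≥0∞ := ENNReal.ofReal c with hc'_def
  have hc'0 : c' ≠ 0 := by simp [hc'_def, hc]
  have hc'top : c' ≠ ⊤ := ofReal_ne_top
  have ham : Measurable a := hYm.ennreal_ofReal
  -- denominator a + c' is nonzero and finite
  have hd0 : ∀ ω, a ω + c' ≠ 0 := fun ω => by
    simp [hc'0]
  have hdtop : ∀ ω, a ω + c' ≠ ⊤ := fun ω => by
    simp [ha_def, hc'_def]
  -- integrability of the min function
  have hminm : Measurable fun ω => min 1 (Y ω / c) :=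
    measurable_const.min (hYm.div_const c)
  have hmin0 : ∀ ω, 0 ≤ min 1 (Y ω / c) := fun ω =>
    le_min zero_le_one (div_nonneg (hY0 ω) hc.le)
  have hmin_int : Integrable (fun ω => min 1 (Y ω / c)) P := by
    refine Integrable.mono' (integrable_const 1) hminm.aestronglyMeasurable
      (Filter.Eventually.of_forall fun ω => ?_)
    rw [Real.norm_eq_abs, abs_of_nonneg (hmin0 ω)]
    exact min_le_left _ _
  have hla : ∫⁻ ω, a ω ∂P = 1 := by
    rw [← MeasureTheory.ofReal_integral_eq_lintegral_ofReal hYint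
      (Filter.Eventually.of_forall hY0), hY1, ENNReal.ofReal_one]
  constructor
  · -- lower bound
    set B : ℝ≥0∞ := ∫⁻ ω, ENNReal.ofReal ((Y ω) ^ 2) ∂P + c' with hB_def
    by_cases hBtop : B = ⊤
    · rw [hBtop]; simp
    have hB0 : B ≠ 0 := by
      intro h
      rw [hB_def] at h
      exact hc'0 (by simpa using (add_eq_zero.mp h).2)
    -- Cauchy–Schwarz
    set f : Ω → ℝ≥0∞ := fun ω => (a ω / (a ω + c')) ^ (1/2 : ℝ) with hf_def
    set g : Ω → ℝ≥0∞ := fun ω => (a ω * (a ω + c')) ^ (1/2 : ℝ) with hg_def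
    have hfm : Measurable f := (ham.div (ham.add measurable_const)).pow measurable_const
    have hgm : Measurable g := (ham.mul (ham.add measurable_const)).pow measurable_const
    have hfg : ∀ ω, (f * g) ω = a ω := by
      intro ω
      have h1 : a ω / (a ω + c') * (a ω * (a ω + c')) = a ω * a ω := by
        rw [div_eq_mul_inv]
        calc a ω * (a ω + c')⁻¹ * (a ω * (a ω + c'))
            = a ω * a ω * ((a ω + c')⁻¹ * (a ω + c')) := by ring
          _ = a ω * a ω := by
              rw [ENNReal.inv_mul_cancel (hd0 ω) (hdtop ω), mul_one]
      show f ω * g ω = a ω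
      rw [hf_def, hg_def]
      simp only
      rw [← ENNReal.mul_rpow_of_nonneg _ _ (by norm_num : (0:ℝ) ≤ 1/2), h1,
        ← sq, ← ENNReal.rpow_natCast (a ω) 2, ← ENNReal.rpow_mul]
      norm_num
    have hCS := ENNReal.lintegral_mul_le_Lp_mul_Lq P (show (2:ℝ).HolderConjugate 2 from Real.HolderConjugate.two_two)
      hfm.aemeasurable hgm.aemeasurable
    have hf2 : ∀ ω, f ω ^ (2:ℝ) = a ω / (a ω + c') := by
      intro ω
      rw [hf_def]
      simp only
      rw [← ENNReal.rpow_mul]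
      norm_num
    have hg2 : ∀ ω, g ω ^ (2:ℝ) = a ω * (a ω + c') := by
      intro ω
      rw [hg_def]
      simp only
      rw [← ENNReal.rpow_mul]
      norm_num
    set I : ℝ≥0∞ := ∫⁻ ω, a ω / (a ω + c') ∂P with hI_def
    have hM : ∫⁻ ω, a ω * (a ω + c') ∂P = B := by
      have : ∀ ω, a ω * (a ω + c') = ENNReal.ofReal ((Y ω)^2) + c' * a ω := by
        intro ω
        rw [mul_add, ← sq, ha_def]
        simp only
        rw [← ENNReal.ofReal_pow (hY0 ω), mul_comm]
      rw [lintegral_congr this, lintegral_add_left (by fun_prop),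
        lintegral_const_mul _ ham, hla, mul_one, hB_def]
    have hkey : 1 ≤ I * B := by
      have h1 : (1:ℝ≥0∞) = ∫⁻ ω, (f * g) ω ∂P := by
        rw [lintegral_congr hfg, hla]
      have h2 : (∫⁻ ω, f ω ^ (2:ℝ) ∂P) = I := lintegral_congr hf2
      have h3 : (∫⁻ ω, g ω ^ (2:ℝ) ∂P) = B := by
        rw [lintegral_congr hg2, hM]
      rw [h2, h3] at hCS
      have h4 : (1:ℝ≥0∞) ≤ I ^ (1/2 : ℝ) * B ^ (1/2 : ℝ) := h1 ▸ hCS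
      have h5 : I ^ (1/2 : ℝ) * B ^ (1/2 : ℝ) = (I * B) ^ (1/2 : ℝ) :=
        (ENNReal.mul_rpow_of_nonneg _ _ (by norm_num)).symm
      rw [h5] at h4
      calc (1:ℝ≥0∞) = (1:ℝ≥0∞) ^ (2:ℝ) := by norm_num
        _ ≤ ((I * B) ^ (1/2:ℝ)) ^ (2:ℝ) :=
            ENNReal.rpow_le_rpow h4 (by norm_num)
        _ = I * B := by rw [← ENNReal.rpow_mul]; norm_num
    -- pointwise bound I ≤ ofReal ∫ min
    have hIle : I ≤ ENNReal.ofReal (∫ ω, min 1 (Y ω / c) ∂P) := by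
      rw [MeasureTheory.ofReal_integral_eq_lintegral_ofReal hmin_int
        (Filter.Eventually.of_forall hmin0)]
      refine lintegral_mono fun ω => ?_
      have h1 : a ω + c' = ENNReal.ofReal (Y ω + c) := by
        rw [ha_def, hc'_def, ENNReal.ofReal_add (hY0 ω) hc.le]
      rw [h1, ha_def]
      simp only
      rw [← ENNReal.ofReal_div_of_pos (by linarith [hY0 ω])]
      refine ENNReal.ofReal_le_ofReal (le_min ?_ ?_)
      · rw [div_le_one (by linarith [hY0 ω])]
        linarith
      · gcongr
        · exact hY0 ω
        · linarith [hY0 ω]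
    calc B⁻¹ = B⁻¹ * 1 := (mul_one _).symm
      _ ≤ B⁻¹ * (I * B) := mul_le_mul_right hkey _
      _ = I * (B⁻¹ * B) := by ring
      _ = I := by rw [ENNReal.inv_mul_cancel hB0 hBtop, mul_one]
      _ ≤ _ := hIle
  · -- upper bound
    refine le_min ?_ ?_
    · calc ∫ ω, min 1 (Y ω / c) ∂P ≤ ∫ _ω, (1:ℝ) ∂P :=
            integral_mono hmin_int (integrable_const 1) fun ω => min_le_left _ _
        _ = 1 := by simp
    · calc ∫ ω, min 1 (Y ω / c) ∂P ≤ ∫ ω, Y ω / c ∂P :=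
            integral_mono hmin_int (hYint.div_const c) fun ω => min_le_right _ _
        _ = 1 / c := by rw [integral_div, hY1]
end

section
/- Let ν be a probability measure on [0,∞) with ∫ y dν(y) = 1 and let c > 0. Then ∫ min(1, y/c) dν(y) ≥ (∫ y·(max(y,c)) dν(y))^{-1} ≥ (∫ y² dν(y) + c)^{-1}. -/
open MeasureTheory ProbabilityTheory ENNReal

/-- Let `ν` be a probability measure on `[0,∞)` (a probability measure on `ℝ` giving full
mass to the non-negative reals) with mean `1`, and let `c > 0`. Then
`∫ min(1, y/c) dν ≥ (∫ y·max(y,c) dν)⁻¹ ≥ (∫ y² dν + c)⁻¹`, where the possibly infinite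
integrals are lower Lebesgue integrals in `ℝ≥0∞`. -/
theorem stmt1 (ν : Measure ℝ) [IsProbabilityMeasure ν] (hsupp : ∀ᵐ y ∂ν, 0 ≤ y)
    (hint : Integrable (fun y => y) ν) (hmean : ∫ y, y ∂ν = 1) (c : ℝ) (hc : 0 < c) :
    (∫⁻ y, ENNReal.ofReal (y * max y c) ∂ν)⁻¹
        ≤ ENNReal.ofReal (∫ y, min 1 (y / c) ∂ν) ∧
      (∫⁻ y, ENNReal.ofReal (y ^ 2) ∂ν + ENNReal.ofReal c)⁻¹
        ≤ (∫⁻ y, ENNReal.ofReal (y * max y c) ∂ν)⁻¹ := by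
  -- Notation
  set A : ℝ≥0∞ := ∫⁻ y, ENNReal.ofReal (min 1 (y / c)) ∂ν with hA
  set B : ℝ≥0∞ := ∫⁻ y, ENNReal.ofReal (y * max y c) ∂ν with hB
  -- the mean as a lower integral
  have h1 : ∫⁻ y, ENNReal.ofReal y ∂ν = 1 := by
    rw [← ofReal_integral_eq_lintegral_ofReal hint hsupp, hmean, ENNReal.ofReal_one]
  -- integrability of the min function
  have hmin_int : Integrable (fun y => min 1 (y / c)) ν := by
    have : Integrable (fun y => y / c) ν := hint.div_const c
    exact (integrable_const (1 : ℝ)).inf this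
  have hmin_nn : 0 ≤ᵐ[ν] fun y => min 1 (y / c) := by
    filter_upwards [hsupp] with y hy
    exact le_min zero_le_one (div_nonneg hy hc.le)
  have hAeq : A = ENNReal.ofReal (∫ y, min 1 (y / c) ∂ν) := by
    rw [hA, ← ofReal_integral_eq_lintegral_ofReal hmin_int hmin_nn]
  -- pointwise product identity
  have hprod : ∀ y : ℝ, 0 ≤ y → min 1 (y / c) * (y * max y c) = y ^ 2 := by
    intro y hy
    rcases le_total y c with h | h
    · rw [max_eq_right h, min_eq_right (by rw [div_le_one hc]; exact h)]
      field_simp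
    · rw [max_eq_left h, min_eq_left (by rw [le_div_iff₀ hc]; simpa using h)]
      ring
  -- Cauchy-Schwarz : 1 ≤ A * B
  have hf : AEMeasurable (fun y => ENNReal.ofReal (min 1 (y / c)) ^ (2⁻¹ : ℝ)) ν :=
    (measurable_ofReal.comp ((measurable_const.min (measurable_id.div_const c)))).aemeasurable.pow_const _
  have hg : AEMeasurable (fun y => ENNReal.ofReal (y * max y c) ^ (2⁻¹ : ℝ)) ν :=
    (measurable_ofReal.comp ((measurable_id.mul (measurable_id.max measurable_const)))).aemeasurable.pow_const _
  have hconj : Real.HolderConjugate 2 2 := by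
    constructor <;> norm_num
  have hCS := ENNReal.lintegral_mul_le_Lp_mul_Lq ν hconj hf hg
  have hfg : (fun y => (ENNReal.ofReal (min 1 (y / c)) ^ (2⁻¹ : ℝ)) *
      (ENNReal.ofReal (y * max y c) ^ (2⁻¹ : ℝ))) =ᵐ[ν] fun y => ENNReal.ofReal y := by
    filter_upwards [hsupp] with y hy
    rw [← ENNReal.mul_rpow_of_nonneg _ _ (by norm_num), ← ENNReal.ofReal_mul
      (le_min zero_le_one (div_nonneg hy hc.le)), hprod y hy,
      ENNReal.ofReal_pow hy, ← ENNReal.rpow_natCast, ← ENNReal.rpow_mul]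
    norm_num
  have hsq : ∀ x : ℝ≥0∞, (x ^ (2⁻¹ : ℝ)) ^ (2 : ℝ) = x := by
    intro x
    rw [← ENNReal.rpow_mul]
    norm_num
  have h1AB : (1 : ℝ≥0∞) ≤ A * B := by
    have hle : (1 : ℝ≥0∞) ≤ A ^ (1/2 : ℝ) * B ^ (1/2 : ℝ) := by
      calc (1 : ℝ≥0∞) = ∫⁻ y, ENNReal.ofReal y ∂ν := h1.symm
        _ = ∫⁻ y, ((fun y => ENNReal.ofReal (min 1 (y / c)) ^ (2⁻¹ : ℝ)) *
              (fun y => ENNReal.ofReal (y * max y c) ^ (2⁻¹ : ℝ))) y ∂ν :=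
            (lintegral_congr_ae hfg).symm
        _ ≤ _ := by
            refine hCS.trans_eq ?_
            simp only [hsq]
            rfl
    have := ENNReal.rpow_le_rpow hle (by norm_num : (0:ℝ) ≤ 2)
    rwa [ENNReal.one_rpow, ENNReal.mul_rpow_of_nonneg _ _ (by norm_num : (0:ℝ) ≤ 2),
      show (1/2 : ℝ) = 2⁻¹ by norm_num, hsq, hsq] at this
  have hA0 : A ≠ 0 := by
    intro h; rw [h, zero_mul] at h1AB; simp at h1AB
  have hB0 : B ≠ 0 := by
    intro h; rw [h, mul_zero] at h1AB; simp at h1AB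
  constructor
  · rw [← hAeq, ENNReal.inv_le_iff_le_mul (fun _ => hB0) (fun _ => hA0), mul_comm]
    exact h1AB
  · apply ENNReal.inv_le_inv.mpr
    have hpt : ∀ᵐ y ∂ν, ENNReal.ofReal (y * max y c) ≤
        ENNReal.ofReal (y ^ 2) + ENNReal.ofReal (y * c) := by
      filter_upwards [hsupp] with y hy
      rw [← ENNReal.ofReal_add (by positivity) (by positivity)]
      apply ENNReal.ofReal_le_ofReal
      have : max y c ≤ y + c := max_le (by linarith) (by linarith)
      calc y * max y c ≤ y * (y + c) := by nlinarith
        _ = y ^ 2 + y * c := by ring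
    calc B ≤ ∫⁻ y, (ENNReal.ofReal (y ^ 2) + ENNReal.ofReal (y * c)) ∂ν :=
          lintegral_mono_ae hpt
      _ = (∫⁻ y, ENNReal.ofReal (y ^ 2) ∂ν) + ∫⁻ y, ENNReal.ofReal (y * c) ∂ν := by
          apply lintegral_add_right
          exact measurable_ofReal.comp (measurable_id.mul measurable_const)
      _ = (∫⁻ y, ENNReal.ofReal (y ^ 2) ∂ν) + ENNReal.ofReal c := by
          congr 1
          have : ∀ y : ℝ, ENNReal.ofReal (y * c) = ENNReal.ofReal y * ENNReal.ofReal c := by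
            intro y; rw [ENNReal.ofReal_mul']; exact hc.le
          simp_rw [this]
          rw [lintegral_mul_const _ measurable_ofReal, h1, one_mul]
end

section
/- The jump kernel of the independent Metropolis–Hastings chain satisfies the one-step minorization condition P̃(x, A) ≥ π(ρ)·π̃(A) for all x ∈ E and measurable A, where π̃(dy) = π(dy)ρ(y)/π(ρ). -/
open MeasureTheory ProbabilityTheory ENNReal

/-- The jump kernel of the independent Metropolis–Hastings chain,
`P̃(x, A) = ∫_A μ(dy) α(x,y)/ρ(x)` with `α(x,y) = min(1, w(y)/w(x))` and
`ρ(x) = ∫ α(x,y) μ(dy)`, satisfies the one-step minorization condition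
`P̃(x, A) ≥ π(ρ)·π̃(A)` for all `x` and all measurable `A`, where
`π̃(A) = (∫_A ρ dπ)/π(ρ)`. All quantities are expressed in `ℝ≥0∞`. -/
theorem stmt4 {E : Type*} [MeasurableSpace E] (μ π : Measure E)
    [IsProbabilityMeasure μ] [IsProbabilityMeasure π]
    (w : E → ℝ) (hwm : Measurable w) (hw : ∀ x, 0 < w x)
    (hdens : π = μ.withDensity (fun x => ENNReal.ofReal (w x)))
    (ρ : E → ℝ) (hρ : ∀ x, ρ x = ∫ y, min 1 (w y / w x) ∂μ) :
    ∀ x : E, ∀ A : Set E, MeasurableSet A →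
      (∫⁻ y, ENNReal.ofReal (ρ y) ∂π) *
          ((∫⁻ y in A, ENNReal.ofReal (ρ y) ∂π) / ∫⁻ y, ENNReal.ofReal (ρ y) ∂π)
        ≤ ∫⁻ y in A, ENNReal.ofReal (min 1 (w y / w x) / ρ x) ∂μ := by
  intro x A hA
  -- measurability of ρ
  have hρm : Measurable ρ := by
    have hsm : StronglyMeasurable (fun p : E × E => min 1 (w p.2 / w p.1)) :=
      (measurable_const.min ((hwm.comp measurable_snd).div
        (hwm.comp measurable_fst))).stronglyMeasurable
    have := hsm.integral_prod_right' (ν := μ)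
    have heq : ρ = fun y => ∫ z, min 1 (w z / w y) ∂μ := funext hρ
    rw [heq]
    exact this.measurable
  -- basic nonnegativity of the integrand
  have hα_nonneg : ∀ z y : E, 0 ≤ min 1 (w y / w z) := fun z y =>
    le_min zero_le_one (div_nonneg (hw y).le (hw z).le)
  have hα_le_one : ∀ z y : E, min 1 (w y / w z) ≤ 1 := fun z y => min_le_left _ _
  -- integrability of the acceptance function
  have hα_int : ∀ z : E, Integrable (fun y => min 1 (w y / w z)) μ := by
    intro z
    refine Integrable.mono' (integrable_const 1)
      ((measurable_const.min (hwm.div measurable_const)).aestronglyMeasurable) ?_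
    filter_upwards with y
    rw [Real.norm_eq_abs, abs_of_nonneg (hα_nonneg z y)]
    exact hα_le_one z y
  -- ∫⁻ ofReal w = 1
  have hw1 : ∫⁻ y, ENNReal.ofReal (w y) ∂μ = 1 := by
    have := measure_univ (μ := π)
    rwa [hdens, withDensity_apply _ MeasurableSet.univ, setLIntegral_univ] at this
  -- w integrable with integral 1
  have hw_int : Integrable w μ := by
    refine ⟨hwm.aestronglyMeasurable, ?_⟩
    rw [hasFiniteIntegral_iff_ofReal (ae_of_all _ fun y => (hw y).le), hw1]
    exact one_lt_top
  have hw_int1 : ∫ y, w y ∂μ = 1 := by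
    rw [integral_eq_lintegral_of_nonneg_ae (ae_of_all _ fun y => (hw y).le)
      hwm.aestronglyMeasurable, hw1, ENNReal.toReal_one]
  -- ρ bounds
  have hρ_pos : ∀ z : E, 0 < ρ z := by
    intro z
    rw [hρ z]
    rw [integral_pos_iff_support_of_nonneg (hα_nonneg z) (hα_int z)]
    have : Function.support (fun y => min 1 (w y / w z)) = Set.univ := by
      ext y; simp [Function.support, (lt_min one_pos (div_pos (hw y) (hw z))).ne']
    rw [this]; simp
  have hρ_le_one : ∀ z : E, ρ z ≤ 1 := by
    intro z
    rw [hρ z]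
    calc ∫ y, min 1 (w y / w z) ∂μ ≤ ∫ _, (1 : ℝ) ∂μ :=
          integral_mono (hα_int z) (integrable_const 1) (fun y => hα_le_one z y)
      _ = 1 := by simp
  have hmul : ∀ z y : E, w z * min 1 (w y / w z) = min (w z) (w y) := by
    intro z y
    rw [mul_min_of_nonneg _ _ (hw z).le, mul_one, mul_div_cancel₀ _ (hw z).ne']
  have hρw_le_one : ∀ z : E, ρ z * w z ≤ 1 := by
    intro z
    have : ρ z * w z = ∫ y, min (w z) (w y) ∂μ := by
      rw [hρ z, mul_comm, ← integral_const_mul]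
      congr 1; ext y; exact hmul z y
    rw [this, ← hw_int1]
    exact integral_mono (((hα_int z).const_mul (w z)).congr (by
      filter_upwards with y; exact (hmul z y)))
      hw_int (fun y => min_le_right _ _)
  -- key pointwise inequality
  have key : ∀ y : E, w y * ρ y ≤ min 1 (w y / w x) / ρ x := by
    intro y
    rw [le_div_iff₀ (hρ_pos x)]
    have hmin : min 1 (w y / w x) = min (w x) (w y) / w x := by
      rw [← min_div_div_right (hw x).le, div_self (hw x).ne']
    rw [hmin, le_div_iff₀ (hw x)]
    have hab : w y * w x = min (w x) (w y) * max (w x) (w y) := by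
      rw [min_mul_max, mul_comm]
    calc w y * ρ y * ρ x * w x = (ρ x * ρ y * max (w x) (w y)) * min (w x) (w y) := by
          linear_combination (-(ρ x * ρ y)) * (min_mul_max (w x) (w y))
      _ ≤ 1 * min (w x) (w y) := by
          refine mul_le_mul_of_nonneg_right ?_ (le_min (hw x).le (hw y).le)
          rcases max_cases (w x) (w y) with ⟨h, _⟩ | ⟨h, _⟩
          · rw [h]
            calc ρ x * ρ y * w x = (ρ x * w x) * ρ y := by ring
              _ ≤ 1 * 1 := mul_le_mul (hρw_le_one x)
                  (hρ_le_one y) (le_of_lt (hρ_pos y))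
                  (by positivity)
              _ = 1 := by ring
          · rw [h]
            calc ρ x * ρ y * w y = (ρ y * w y) * ρ x := by ring
              _ ≤ 1 * 1 := mul_le_mul (hρw_le_one y) (hρ_le_one x)
                  (le_of_lt (hρ_pos x)) (by positivity)
              _ = 1 := by ring
      _ = min (w x) (w y) := one_mul _
  -- reduce via a * (b / a) ≤ b
  refine le_trans ENNReal.mul_div_le ?_
  -- rewrite the π-integral as a μ-integral
  have hrw : ∫⁻ y in A, ENNReal.ofReal (ρ y) ∂π
      = ∫⁻ y in A, ENNReal.ofReal (w y) * ENNReal.ofReal (ρ y) ∂μ := by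
    rw [hdens, setLIntegral_withDensity_eq_setLIntegral_mul μ
      (hwm.ennreal_ofReal) (hρm.ennreal_ofReal) hA]
    rfl
  rw [hrw]
  refine lintegral_mono fun y => ?_
  rw [← ENNReal.ofReal_mul (hw y).le]
  exact ENNReal.ofReal_le_ofReal (key y)
end

section
/- For the IMH sampler with π(w) = ∞: there exists C > 0 such that the set B = {x : w(x) ≥ C} satisfies π(Bᶜ) > 0, π(B) > 0 and μ(B) > 0; moreover for x ∈ B, ρ(x) ≥ π(Bᶜ)/w(x), and for x ∈ Bᶜ, ρ(x) ≥ μ(B). Consequently, if π(f²) < ∞ and π(w·f²) < ∞ then π(f²/ρ) ≤ π(1_B·w·f²)/π(Bᶜ) + π(1_{Bᶜ}·f²)/μ(B) < ∞. -/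
open MeasureTheory ProbabilityTheory ENNReal

/-- For the IMH sampler with `π(w) = ∞`: there exists `C > 0` such that
`B = {x : w(x) ≥ C}` satisfies `π(Bᶜ) > 0`, `π(B) > 0` and `μ(B) > 0`; moreover for
`x ∈ B`, `ρ(x) ≥ π(Bᶜ)/w(x)`, and for `x ∈ Bᶜ`, `ρ(x) ≥ μ(B)`. Consequently, if
`π(f²) < ∞` and `π(w·f²) < ∞` then
`π(f²/ρ) ≤ π(1_B·w·f²)/π(Bᶜ) + π(1_{Bᶜ}·f²)/μ(B) < ∞`. -/
theorem stmt6 {E : Type*} [MeasurableSpace E] (μ π : Measure E)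
    [IsProbabilityMeasure μ] [IsProbabilityMeasure π]
    (w : E → ℝ) (hwm : Measurable w) (hw : ∀ x, 0 < w x)
    (hdens : π = μ.withDensity (fun x => ENNReal.ofReal (w x)))
    (ρ : E → ℝ) (hρ : ∀ x, ρ x = ∫ y, min 1 (w y / w x) ∂μ)
    (hπw : ∫⁻ x, ENNReal.ofReal (w x) ∂π = ⊤)
    (f : E → ℝ) (hfm : Measurable f) (hf0 : ∫ x, f x ∂π = 0) :
    ∃ C : ℝ, 0 < C ∧
      (π {x | C ≤ w x}ᶜ ≠ 0 ∧ π {x | C ≤ w x} ≠ 0 ∧ μ {x | C ≤ w x} ≠ 0) ∧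
      (∀ x ∈ {x | C ≤ w x}, (π {x | C ≤ w x}ᶜ).toReal / w x ≤ ρ x) ∧
      (∀ x ∈ {x | C ≤ w x}ᶜ, (μ {x | C ≤ w x}).toReal ≤ ρ x) ∧
      ((∫⁻ x, ENNReal.ofReal (f x ^ 2) ∂π < ⊤ → ∫⁻ x, ENNReal.ofReal (w x * f x ^ 2) ∂π < ⊤ →
        (∫⁻ x, ENNReal.ofReal (f x ^ 2 / ρ x) ∂π
            ≤ (∫⁻ x in {x | C ≤ w x}, ENNReal.ofReal (w x * f x ^ 2) ∂π) / π {x | C ≤ w x}ᶜ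
              + (∫⁻ x in {x | C ≤ w x}ᶜ, ENNReal.ofReal (f x ^ 2) ∂π) / μ {x | C ≤ w x} ∧
          ∫⁻ x, ENNReal.ofReal (f x ^ 2 / ρ x) ∂π < ⊤)) ) := by
  classical
  -- Step 1: choose C
  have hex : ∃ n : ℕ, π {x | w x < (n : ℝ)} ≠ 0 := by
    by_contra h
    push_neg at h
    have hU : (⋃ n : ℕ, {x | w x < (n : ℝ)}) = Set.univ := by
      ext x
      simp only [Set.mem_iUnion, Set.mem_setOf_eq, Set.mem_univ, iff_true]
      exact exists_nat_gt (w x)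
    have h0 : π (⋃ n : ℕ, {x | w x < (n : ℝ)}) = 0 := measure_iUnion_null h
    rw [hU] at h0
    simp [measure_univ] at h0
  obtain ⟨n, hn⟩ := hex
  have hn1 : 0 < n := by
    rcases Nat.eq_zero_or_pos n with h0 | h
    · subst h0
      exfalso
      apply hn
      convert measure_empty (μ := π)
      ext x
      simp [(hw x).not_gt, not_lt.mpr (hw x).le]
    · exact h
  set C : ℝ := (n : ℝ) with hCdef
  have hCpos : 0 < C := by positivity
  set B : Set E := {x | C ≤ w x} with hBdef
  have hB : MeasurableSet B := measurableSet_le measurable_const hwm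
  have hBc : Bᶜ = {x | w x < C} := by
    ext x
    simp [hBdef, not_le]
  have haneq : π Bᶜ ≠ 0 := by rw [hBc]; exact hn
  have hgmeas : ∀ x : E, Measurable fun y => min 1 (w y / w x) :=
    fun x => measurable_const.min (hwm.div_const _)
  have hπB : π B ≠ 0 := by
    intro h
    have h1 : ∫⁻ x in B, ENNReal.ofReal (w x) ∂π = 0 := by
      rw [Measure.restrict_eq_zero.mpr h, lintegral_zero_measure]
    have h2 : ∫⁻ x in Bᶜ, ENNReal.ofReal (w x) ∂π ≤ ENNReal.ofReal C * π Bᶜ := by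
      calc ∫⁻ x in Bᶜ, ENNReal.ofReal (w x) ∂π
          ≤ ∫⁻ _ in Bᶜ, ENNReal.ofReal C ∂π := by
            apply setLIntegral_mono measurable_const
            intro x hx
            rw [hBc] at hx
            exact ENNReal.ofReal_le_ofReal hx.le
        _ = ENNReal.ofReal C * π Bᶜ := by rw [setLIntegral_const]
    have h3 : (⊤ : ℝ≥0∞) ≤ ENNReal.ofReal C * π Bᶜ := by
      rw [← hπw, ← lintegral_add_compl (fun x => ENNReal.ofReal (w x)) hB, h1, zero_add]
      exact h2
    exact absurd h3 (by
      simp only [top_le_iff]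
      exact (ENNReal.mul_lt_top ENNReal.ofReal_lt_top (measure_lt_top π _)).ne)
  have hμB : μ B ≠ 0 := by
    intro h
    apply hπB
    rw [hdens, withDensity_apply _ hB, Measure.restrict_eq_zero.mpr h, lintegral_zero_measure]
  -- ρ facts
  have hg0 : ∀ x y : E, 0 ≤ min 1 (w y / w x) :=
    fun x y => le_min zero_le_one (div_nonneg (hw y).le (hw x).le)
  have hρ0 : ∀ x, 0 ≤ ρ x := fun x => by
    rw [hρ]; exact integral_nonneg (hg0 x)
  have hgint : ∀ x, Integrable (fun y => min 1 (w y / w x)) μ := by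
    intro x
    refine (integrable_const (1 : ℝ)).mono' (hgmeas x).aestronglyMeasurable ?_
    filter_upwards with y
    rw [Real.norm_eq_abs, abs_of_nonneg (hg0 x y)]
    exact min_le_left _ _
  have hρlint : ∀ x, ENNReal.ofReal (ρ x)
      = ∫⁻ y, ENNReal.ofReal (min 1 (w y / w x)) ∂μ := by
    intro x
    rw [hρ]
    exact ofReal_integral_eq_lintegral_ofReal (hgint x) (ae_of_all _ (hg0 x))
  -- bound 1
  have bound1 : ∀ x ∈ B, (π Bᶜ).toReal / w x ≤ ρ x := by
    intro x hx
    have hwx : C ≤ w x := hx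
    have key : π Bᶜ ≤ ENNReal.ofReal (w x * ρ x) := by
      rw [hdens, withDensity_apply _ hB.compl]
      calc ∫⁻ y in Bᶜ, ENNReal.ofReal (w y) ∂μ
          = ∫⁻ y in Bᶜ, ENNReal.ofReal (w x) * ENNReal.ofReal (min 1 (w y / w x)) ∂μ := by
            apply setLIntegral_congr_fun hB.compl
            intro y hy
            dsimp only
            rw [hBc] at hy
            have h1 : w y / w x ≤ 1 := (div_le_one (hw x)).2 (hy.le.trans hwx)
            rw [min_eq_right h1, ← ENNReal.ofReal_mul (hw x).le,
              mul_div_cancel₀ _ (hw x).ne']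
        _ = ENNReal.ofReal (w x) * ∫⁻ y in Bᶜ, ENNReal.ofReal (min 1 (w y / w x)) ∂μ :=
            lintegral_const_mul _ (hgmeas x).ennreal_ofReal
        _ ≤ ENNReal.ofReal (w x) * ∫⁻ y, ENNReal.ofReal (min 1 (w y / w x)) ∂μ :=
            mul_le_mul_right (setLIntegral_le_lintegral _ _) _
        _ = ENNReal.ofReal (w x) * ENNReal.ofReal (ρ x) := by rw [hρlint]
        _ = ENNReal.ofReal (w x * ρ x) := (ENNReal.ofReal_mul (hw x).le).symm
    have key2 : (π Bᶜ).toReal ≤ w x * ρ x :=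
      ENNReal.toReal_le_of_le_ofReal (mul_nonneg (hw x).le (hρ0 x)) key
    rw [div_le_iff₀ (hw x)]
    nlinarith [key2]
  -- bound 2
  have bound2 : ∀ x ∈ Bᶜ, (μ B).toReal ≤ ρ x := by
    intro x hx
    rw [hBc] at hx
    have hwx : w x < C := hx
    have key : μ B ≤ ENNReal.ofReal (ρ x) := by
      rw [hρlint]
      calc μ B = ∫⁻ _ in B, 1 ∂μ := by rw [setLIntegral_one]
        _ ≤ ∫⁻ y in B, ENNReal.ofReal (min 1 (w y / w x)) ∂μ := by
            apply setLIntegral_mono (hgmeas x).ennreal_ofReal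
            intro y hy
            have h1 : (1 : ℝ) ≤ w y / w x := (one_le_div (hw x)).2 (hwx.le.trans hy)
            simp [min_eq_left h1]
        _ ≤ ∫⁻ y, ENNReal.ofReal (min 1 (w y / w x)) ∂μ := setLIntegral_le_lintegral _ _
    exact ENNReal.toReal_le_of_le_ofReal (hρ0 x) key
  refine ⟨C, hCpos, ⟨haneq, hπB, hμB⟩, bound1, bound2, ?_⟩
  -- final part
  intro hf2 hwf2
  have haT : π Bᶜ ≠ ⊤ := measure_ne_top _ _
  have hbT : μ B ≠ ⊤ := measure_ne_top _ _
  have ha0 : 0 < (π Bᶜ).toReal := ENNReal.toReal_pos haneq haT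
  have hb0 : 0 < (μ B).toReal := ENNReal.toReal_pos hμB hbT
  have hρposB : ∀ x ∈ B, 0 < ρ x := fun x hx =>
    lt_of_lt_of_le (div_pos ha0 (hw x)) (bound1 x hx)
  have hρposBc : ∀ x ∈ Bᶜ, 0 < ρ x := fun x hx => lt_of_lt_of_le hb0 (bound2 x hx)
  have hmeas1 : Measurable fun x => ENNReal.ofReal (w x * f x ^ 2) :=
    (hwm.mul (hfm.pow_const 2)).ennreal_ofReal
  have hmeas2 : Measurable fun x => ENNReal.ofReal (f x ^ 2) :=
    (hfm.pow_const 2).ennreal_ofReal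
  have hBle : ∫⁻ x in B, ENNReal.ofReal (f x ^ 2 / ρ x) ∂π
      ≤ (∫⁻ x in B, ENNReal.ofReal (w x * f x ^ 2) ∂π) / π Bᶜ := by
    calc ∫⁻ x in B, ENNReal.ofReal (f x ^ 2 / ρ x) ∂π
        ≤ ∫⁻ x in B, ENNReal.ofReal (w x * f x ^ 2) / π Bᶜ ∂π := by
          apply setLIntegral_mono (hmeas1.div_const _)
          intro x hx
          have h1 : (π Bᶜ).toReal / w x ≤ ρ x := bound1 x hx
          have hρpos : 0 < ρ x := hρposB x hx
          have h2 : f x ^ 2 / ρ x ≤ w x * f x ^ 2 / (π Bᶜ).toReal := by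
            rw [div_le_div_iff₀ hρpos ha0]
            have h3 : (π Bᶜ).toReal ≤ ρ x * w x := (div_le_iff₀ (hw x)).1 h1
            nlinarith [sq_nonneg (f x)]
          calc ENNReal.ofReal (f x ^ 2 / ρ x)
              ≤ ENNReal.ofReal (w x * f x ^ 2 / (π Bᶜ).toReal) :=
                ENNReal.ofReal_le_ofReal h2
            _ = ENNReal.ofReal (w x * f x ^ 2) / ENNReal.ofReal (π Bᶜ).toReal :=
                ENNReal.ofReal_div_of_pos ha0
            _ = ENNReal.ofReal (w x * f x ^ 2) / π Bᶜ := by rw [ENNReal.ofReal_toReal haT]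
      _ = (∫⁻ x in B, ENNReal.ofReal (w x * f x ^ 2) ∂π) / π Bᶜ := by
          simp_rw [div_eq_mul_inv]
          exact lintegral_mul_const' _ _ (ENNReal.inv_ne_top.mpr haneq)
  have hBcle : ∫⁻ x in Bᶜ, ENNReal.ofReal (f x ^ 2 / ρ x) ∂π
      ≤ (∫⁻ x in Bᶜ, ENNReal.ofReal (f x ^ 2) ∂π) / μ B := by
    calc ∫⁻ x in Bᶜ, ENNReal.ofReal (f x ^ 2 / ρ x) ∂π
        ≤ ∫⁻ x in Bᶜ, ENNReal.ofReal (f x ^ 2) / μ B ∂π := by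
          apply setLIntegral_mono (hmeas2.div_const _)
          intro x hx
          have h1 : (μ B).toReal ≤ ρ x := bound2 x hx
          have hρpos : 0 < ρ x := hρposBc x hx
          have h2 : f x ^ 2 / ρ x ≤ f x ^ 2 / (μ B).toReal := by
            apply div_le_div_of_nonneg_left (sq_nonneg _) hb0 h1
          calc ENNReal.ofReal (f x ^ 2 / ρ x)
              ≤ ENNReal.ofReal (f x ^ 2 / (μ B).toReal) := ENNReal.ofReal_le_ofReal h2
            _ = ENNReal.ofReal (f x ^ 2) / ENNReal.ofReal (μ B).toReal :=
                ENNReal.ofReal_div_of_pos hb0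
            _ = ENNReal.ofReal (f x ^ 2) / μ B := by rw [ENNReal.ofReal_toReal hbT]
      _ = (∫⁻ x in Bᶜ, ENNReal.ofReal (f x ^ 2) ∂π) / μ B := by
          simp_rw [div_eq_mul_inv]
          exact lintegral_mul_const' _ _ (ENNReal.inv_ne_top.mpr hμB)
  have hsplit : ∫⁻ x, ENNReal.ofReal (f x ^ 2 / ρ x) ∂π
      = ∫⁻ x in B, ENNReal.ofReal (f x ^ 2 / ρ x) ∂π
        + ∫⁻ x in Bᶜ, ENNReal.ofReal (f x ^ 2 / ρ x) ∂π :=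
    (lintegral_add_compl _ hB).symm
  have hmain : ∫⁻ x, ENNReal.ofReal (f x ^ 2 / ρ x) ∂π
      ≤ (∫⁻ x in B, ENNReal.ofReal (w x * f x ^ 2) ∂π) / π Bᶜ
        + (∫⁻ x in Bᶜ, ENNReal.ofReal (f x ^ 2) ∂π) / μ B := by
    rw [hsplit]; exact add_le_add hBle hBcle
  refine ⟨hmain, lt_of_le_of_lt hmain ?_⟩
  have t1 : (∫⁻ x in B, ENNReal.ofReal (w x * f x ^ 2) ∂π) / π Bᶜ < ⊤ :=
    ENNReal.div_lt_top (lt_of_le_of_lt (setLIntegral_le_lintegral _ _) hwf2).ne haneq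
  have t2 : (∫⁻ x in Bᶜ, ENNReal.ofReal (f x ^ 2) ∂π) / μ B < ⊤ :=
    ENNReal.div_lt_top (lt_of_le_of_lt (setLIntegral_le_lintegral _ _) hf2).ne hμB
  exact ENNReal.add_lt_top.2 ⟨t1, t2⟩
end

section
/- For the IMH sampler, with f ∈ L²₀(E, π): π(f²/ρ) < ∞ if and only if π(w·f²) < ∞ (equivalently, μ(w²·f²) < ∞). -/
open MeasureTheory ProbabilityTheory ENNReal

/-- For the IMH sampler with `w = dπ/dμ > 0` and
`ρ(x) = ∫ min(1, w(y)/w(x)) μ(dy)`, and `f ∈ L²₀(E, π)`: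
`π(f²/ρ) < ∞` if and only if `π(w·f²) < ∞`; moreover
`π(w·f²) = μ(w²·f²)`, so the condition is equivalently `μ(w²·f²) < ∞`. -/
theorem stmt7 {E : Type*} [MeasurableSpace E] (μ π : Measure E)
    [IsProbabilityMeasure μ] [IsProbabilityMeasure π]
    (w : E → ℝ) (hwm : Measurable w) (hw : ∀ x, 0 < w x)
    (hdens : π = μ.withDensity (fun x => ENNReal.ofReal (w x)))
    (ρ : E → ℝ) (hρ : ∀ x, ρ x = ∫ y, min 1 (w y / w x) ∂μ)
    (f : E → ℝ) (hfm : Measurable f) (hf0 : ∫ x, f x ∂π = 0)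
    (hf2 : ∫⁻ x, ENNReal.ofReal (f x ^ 2) ∂π < ⊤) :
    (∫⁻ x, ENNReal.ofReal (f x ^ 2 / ρ x) ∂π < ⊤
        ↔ ∫⁻ x, ENNReal.ofReal (w x * f x ^ 2) ∂π < ⊤) ∧
      ∫⁻ x, ENNReal.ofReal (w x * f x ^ 2) ∂π
        = ∫⁻ x, ENNReal.ofReal (w x ^ 2 * f x ^ 2) ∂μ := by
  have hwem : Measurable fun x => ENNReal.ofReal (w x) := hwm.ennreal_ofReal
  -- ∫⁻ ofReal w dμ = 1
  have hlw : ∫⁻ x, ENNReal.ofReal (w x) ∂μ = 1 := by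
    have : π Set.univ = 1 := measure_univ
    rw [hdens, withDensity_apply _ MeasurableSet.univ] at this
    simpa using this
  -- w integrable with ∫ w dμ = 1
  have hwint : Integrable w μ := by
    refine ⟨hwm.aestronglyMeasurable, ?_⟩
    rw [hasFiniteIntegral_iff_norm]
    have : ∀ x, ENNReal.ofReal ‖w x‖ = ENNReal.ofReal (w x) := fun x => by
      rw [Real.norm_eq_abs, abs_of_pos (hw x)]
    simp_rw [this, hlw]
    exact one_lt_top
  have hwint1 : ∫ x, w x ∂μ = 1 := by
    rw [integral_eq_lintegral_of_nonneg_ae (Filter.Eventually.of_forall fun x => (hw x).le)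
      hwm.aestronglyMeasurable, hlw]
    simp
  -- existence of c > 0 with positive measure of {c ≤ w}
  obtain ⟨c, hc, hs⟩ : ∃ c : ℝ, 0 < c ∧ 0 < μ {x | c ≤ w x} := by
    by_contra h
    push_neg at h
    have hcover : (Set.univ : Set E) ⊆ ⋃ n : ℕ, {x | 1 / ((n : ℝ) + 1) ≤ w x} := by
      intro x _
      obtain ⟨n, hn⟩ := exists_nat_one_div_lt (hw x)
      exact Set.mem_iUnion.2 ⟨n, hn.le⟩
    have : (1 : ℝ≥0∞) ≤ 0 := by
      calc (1 : ℝ≥0∞) = μ Set.univ := measure_univ.symm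
        _ ≤ μ (⋃ n : ℕ, {x | 1 / ((n : ℝ) + 1) ≤ w x}) := measure_mono hcover
        _ ≤ ∑' n : ℕ, μ {x | 1 / ((n : ℝ) + 1) ≤ w x} := measure_iUnion_le _
        _ = 0 := by
            simp only [ENNReal.tsum_eq_zero]
            intro n
            exact le_antisymm (h _ (by positivity)) zero_le
    exact absurd this (by simp)
  set s : Set E := {x | c ≤ w x} with hs_def
  have hsm : MeasurableSet s := measurableSet_le measurable_const hwm
  set M : ℝ := (μ s).toReal with hM_def
  have hM : 0 < M := ENNReal.toReal_pos hs.ne' (measure_ne_top μ s)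
  -- upper bound: ρ x ≤ 1 / w x
  have hmin_int : ∀ x, Integrable (fun y => min 1 (w y / w x)) μ := by
    intro x
    refine (integrable_const (1 : ℝ)).mono' ((measurable_const.min (hwm.div_const _)).aestronglyMeasurable) ?_
    refine Filter.Eventually.of_forall fun y => ?_
    rw [Real.norm_eq_abs, abs_of_nonneg (le_min zero_le_one (div_nonneg (hw y).le (hw x).le))]
    exact min_le_left _ _
  have hρ_upper : ∀ x, ρ x ≤ 1 / w x := by
    intro x
    rw [hρ x]
    calc ∫ y, min 1 (w y / w x) ∂μ ≤ ∫ y, w y / w x ∂μ :=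
          integral_mono (hmin_int x) (hwint.div_const _) (fun y => min_le_right _ _)
      _ = 1 / w x := by rw [integral_div, hwint1]
  -- lower bound: min 1 (c / w x) * M ≤ ρ x
  have hρ_lower : ∀ x, min 1 (c / w x) * M ≤ ρ x := by
    intro x
    rw [hρ x]
    have := integral_mono (μ := μ) ((integrable_const (min 1 (c / w x))).indicator hsm)
      (hmin_int x) (fun y => ?_)
    · rwa [integral_indicator_const _ hsm, smul_eq_mul, mul_comm] at this
    · by_cases hy : y ∈ s
      · rw [Set.indicator_of_mem hy]
        exact min_le_min le_rfl (div_le_div_of_nonneg_right hy (hw x).le)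
      · rw [Set.indicator_of_notMem hy]
        exact le_min zero_le_one (div_nonneg (hw y).le (hw x).le)
  have hρ_pos : ∀ x, 0 < ρ x := fun x =>
    lt_of_lt_of_le (mul_pos (lt_min one_pos (div_pos hc (hw x))) hM) (hρ_lower x)
  -- density change equality
  have heq : ∫⁻ x, ENNReal.ofReal (w x * f x ^ 2) ∂π
      = ∫⁻ x, ENNReal.ofReal (w x ^ 2 * f x ^ 2) ∂μ := by
    rw [hdens, lintegral_withDensity_eq_lintegral_mul μ hwem
      (show Measurable fun x => ENNReal.ofReal (w x * f x ^ 2) from (hwm.mul (hfm.pow_const 2)).ennreal_ofReal)]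
    refine lintegral_congr fun x => ?_
    simp only [Pi.mul_apply]
    rw [← ENNReal.ofReal_mul (hw x).le]
    congr 1
    ring
  -- forward pointwise bound: w f² ≤ f²/ρ
  have fwd : ∀ x, ENNReal.ofReal (w x * f x ^ 2) ≤ ENNReal.ofReal (f x ^ 2 / ρ x) := by
    intro x
    apply ENNReal.ofReal_le_ofReal
    calc w x * f x ^ 2 = f x ^ 2 / (1 / w x) := by field_simp
      _ ≤ f x ^ 2 / ρ x := div_le_div_of_nonneg_left (sq_nonneg _) (hρ_pos x) (hρ_upper x)
  -- converse pointwise bound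
  have key : ∀ x, ENNReal.ofReal (f x ^ 2 / ρ x)
      ≤ ENNReal.ofReal (1 / M) * ENNReal.ofReal (f x ^ 2)
        + ENNReal.ofReal (1 / (c * M)) * ENNReal.ofReal (w x * f x ^ 2) := by
    intro x
    rw [← ENNReal.ofReal_mul (by positivity), ← ENNReal.ofReal_mul (by positivity),
      ← ENNReal.ofReal_add (by positivity)
        (mul_nonneg (by positivity) (mul_nonneg (hw x).le (sq_nonneg _)))]
    apply ENNReal.ofReal_le_ofReal
    have hminv : (min 1 (c / w x))⁻¹ ≤ 1 + w x / c := by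
      rcases min_cases 1 (c / w x) with ⟨he, _⟩ | ⟨he, _⟩
      · rw [he, inv_one]
        have := div_nonneg (hw x).le hc.le
        linarith
      · rw [he, inv_div]
        linarith
    calc f x ^ 2 / ρ x ≤ f x ^ 2 / (min 1 (c / w x) * M) :=
          div_le_div_of_nonneg_left (sq_nonneg _)
            (mul_pos (lt_min one_pos (div_pos hc (hw x))) hM) (hρ_lower x)
      _ = f x ^ 2 * (min 1 (c / w x))⁻¹ * M⁻¹ := by rw [div_eq_mul_inv, mul_inv]; ring
      _ ≤ f x ^ 2 * (1 + w x / c) * M⁻¹ := by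
          exact mul_le_mul_of_nonneg_right
            (mul_le_mul_of_nonneg_left hminv (sq_nonneg _)) (inv_nonneg.2 hM.le)
      _ = 1 / M * f x ^ 2 + 1 / (c * M) * (w x * f x ^ 2) := by
          field_simp
  refine ⟨⟨fun h => lt_of_le_of_lt (lintegral_mono fwd) h, fun h => ?_⟩, heq⟩
  calc ∫⁻ x, ENNReal.ofReal (f x ^ 2 / ρ x) ∂π
      ≤ ∫⁻ x, (ENNReal.ofReal (1 / M) * ENNReal.ofReal (f x ^ 2)
          + ENNReal.ofReal (1 / (c * M)) * ENNReal.ofReal (w x * f x ^ 2)) ∂π :=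
        lintegral_mono key
    _ = ENNReal.ofReal (1 / M) * ∫⁻ x, ENNReal.ofReal (f x ^ 2) ∂π
        + ENNReal.ofReal (1 / (c * M)) * ∫⁻ x, ENNReal.ofReal (w x * f x ^ 2) ∂π := by
        rw [lintegral_add_left (show Measurable fun x => ENNReal.ofReal (1 / M) * ENNReal.ofReal (f x ^ 2)
            from measurable_const.mul ((hfm.pow_const 2).ennreal_ofReal)),
          lintegral_const_mul _ ((hfm.pow_const 2).ennreal_ofReal),
          lintegral_const_mul _ (show Measurable fun x => ENNReal.ofReal (w x * f x ^ 2)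
            from (hwm.mul (hfm.pow_const 2)).ennreal_ofReal)]
    _ < ⊤ := by
        apply ENNReal.add_lt_top.2
        exact ⟨ENNReal.mul_lt_top ofReal_lt_top hf2, ENNReal.mul_lt_top ofReal_lt_top h⟩
end

section
/- Let P(x,A) = ρ(x)P̃(x,A) + (1−ρ(x))1_A(x) be π-reversible with jump kernel P̃ reversible with respect to π̃(dx) = π(dx)ρ(x)/π(ρ). Then the right spectral gaps satisfy Gap(P̃) ≥ Gap(P). -/
open MeasureTheory ProbabilityTheory ENNReal

/-- The Dirichlet form `𝓔_K(g) = (1/2)∫ ν(dx) K(x,dy) (g(y) − g(x))²`. -/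
noncomputable def dirichletForm {α : Type*} [MeasurableSpace α] (ν : Measure α)
    (K : α → Measure α) (g : α → ℝ) : ℝ≥0∞ :=
  (1 / 2) * ∫⁻ x, ∫⁻ y, ENNReal.ofReal ((g y - g x) ^ 2) ∂(K x) ∂ν

/-- Reversibility of a kernel `K` with respect to `ν`. -/
def IsReversible {α : Type*} [MeasurableSpace α] (ν : Measure α) (K : α → Measure α) : Prop :=
  ∀ A B : Set α, MeasurableSet A → MeasurableSet B →
    ∫⁻ x in A, K x B ∂ν = ∫⁻ x in B, K x A ∂ν

/-- The right spectral gap of a `ν`-reversible kernel `K`: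
`Gap(K) = inf { 𝓔_K(g)/var_ν(g) : g ∈ L²(ν), var_ν(g) > 0 }`. -/
noncomputable def spectralGap {α : Type*} [MeasurableSpace α] (ν : Measure α)
    (K : α → Measure α) : ℝ≥0∞ :=
  ⨅ g : {g : α → ℝ // MemLp g 2 ν ∧ evariance g ν ≠ 0},
    dirichletForm ν K g.1 / evariance g.1 ν

private lemma lintegral_dirac_le {α : Type*} [MeasurableSpace α] (x : α) (f : α → ℝ≥0∞) :
    ∫⁻ y, f y ∂(Measure.dirac x) ≤ f x := by
  rw [MeasureTheory.lintegral_def]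
  refine iSup₂_le fun φ hφ => ?_
  rw [← SimpleFunc.lintegral_eq_lintegral, lintegral_dirac' x φ.measurable]
  exact hφ x

private lemma nnnorm_sq_ennreal (t : ℝ) : ((‖t‖₊ : ℝ≥0∞)) ^ 2 = ENNReal.ofReal (t ^ 2) := by
  rw [← enorm_eq_nnnorm, Real.enorm_eq_ofReal_abs, ← ENNReal.ofReal_pow (abs_nonneg t), sq_abs]

private lemma evariance_le_lintegral_sq {α : Type*} [MeasurableSpace α] (ν : Measure α)
    [IsProbabilityMeasure ν] {g : α → ℝ} (hg : MemLp g 2 ν) (a : ℝ) :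
    evariance g ν ≤ ∫⁻ x, ((‖g x - a‖₊ : ℝ≥0∞)) ^ 2 ∂ν := by
  set h : α → ℝ := fun x => g x - a with hh
  have hhm : MemLp h 2 ν := hg.sub (memLp_const a)
  have hint : ∫ x, h x ∂ν = (∫ x, g x ∂ν) - a := by
    rw [hh]
    rw [integral_sub (hg.integrable one_le_two) (integrable_const a), integral_const]
    simp
  have heq : evariance h ν = evariance g ν := by
    unfold evariance
    refine lintegral_congr fun x => ?_
    rw [hint]
    simp only [hh]
    rw [sub_sub_sub_cancel_right]
  calc evariance g ν = ENNReal.ofReal (variance h ν) := by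
        rw [← heq, hhm.ofReal_variance_eq]
    _ ≤ ENNReal.ofReal (ν[h ^ 2]) :=
        ENNReal.ofReal_le_ofReal (variance_le_expectation_sq hhm.aestronglyMeasurable)
    _ = ∫⁻ x, ((‖g x - a‖₊ : ℝ≥0∞)) ^ 2 ∂ν := by
        have h1 : ν[h ^ 2] = ∫ x, h x ^ 2 ∂ν := by simp [Pi.pow_apply]
        rw [h1, ofReal_integral_eq_lintegral_ofReal hhm.integrable_sq
          (Filter.Eventually.of_forall fun x => sq_nonneg _)]
        exact lintegral_congr fun x => (nnnorm_sq_ennreal _).symm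

/-- Let `P(x,·) = ρ(x) P̃(x,·) + (1−ρ(x)) δ_x` be `π`-reversible, with jump kernel `P̃`
reversible with respect to `π̃ = π(ρ)⁻¹·ρ·π`. (Using that `Gap(P) > 0` implies
`π`-ess inf `ρ > 0`.) Then the right spectral gaps satisfy `Gap(P̃) ≥ Gap(P)`. -/
theorem stmt10 {E : Type*} [MeasurableSpace E] (π : Measure E) [IsProbabilityMeasure π]
    (ρ : E → ℝ) (hρm : Measurable ρ) (hρ : ∀ x, 0 < ρ x ∧ ρ x ≤ 1)
    (Pt : E → Measure E) (hPt : ∀ x, IsProbabilityMeasure (Pt x))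
    (hrevt : IsReversible
      ((∫⁻ x, ENNReal.ofReal (ρ x) ∂π)⁻¹ • π.withDensity (fun x => ENNReal.ofReal (ρ x))) Pt)
    (hrevP : IsReversible π
      (fun x => ENNReal.ofReal (ρ x) • Pt x + ENNReal.ofReal (1 - ρ x) • Measure.dirac x))
    (hLee : 0 < spectralGap π
        (fun x => ENNReal.ofReal (ρ x) • Pt x + ENNReal.ofReal (1 - ρ x) • Measure.dirac x) →
      ∃ ε : ℝ, 0 < ε ∧ ∀ᵐ x ∂π, ε ≤ ρ x) :
    spectralGap
        ((∫⁻ x, ENNReal.ofReal (ρ x) ∂π)⁻¹ • π.withDensity (fun x => ENNReal.ofReal (ρ x))) Pt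
      ≥ spectralGap π
        (fun x => ENNReal.ofReal (ρ x) • Pt x + ENNReal.ofReal (1 - ρ x) • Measure.dirac x) := by
  set c : ℝ≥0∞ := ∫⁻ x, ENNReal.ofReal (ρ x) ∂π with hc
  set P : E → Measure E := fun x =>
    ENNReal.ofReal (ρ x) • Pt x + ENNReal.ofReal (1 - ρ x) • Measure.dirac x with hP
  set πt : Measure E := c⁻¹ • π.withDensity (fun x => ENNReal.ofReal (ρ x)) with hπt
  -- basic facts about c
  have hc1 : c ≤ 1 := by
    rw [hc]
    calc ∫⁻ x, ENNReal.ofReal (ρ x) ∂π ≤ ∫⁻ _, 1 ∂π :=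
          lintegral_mono fun x => ENNReal.ofReal_le_one.2 (hρ x).2
      _ = 1 := by simp
  have hc0 : c ≠ 0 := by
    intro h
    rw [hc, lintegral_eq_zero_iff hρm.ennreal_ofReal] at h
    obtain ⟨x, hx⟩ := h.exists
    simp only [Pi.zero_apply] at hx
    exact absurd hx (ENNReal.ofReal_pos.2 (hρ x).1).ne'
  have hctop : c ≠ ⊤ := (lt_of_le_of_lt hc1 ENNReal.one_lt_top).ne
  have hwd : π.withDensity (fun x => ENNReal.ofReal (ρ x)) = c • πt := by
    rw [hπt, smul_smul, ENNReal.mul_inv_cancel hc0 hctop, one_smul]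
  have hint : ∀ f : E → ℝ≥0∞,
      ∫⁻ x, ENNReal.ofReal (ρ x) * f x ∂π = c * ∫⁻ x, f x ∂πt := by
    intro f
    have h1 := lintegral_withDensity_eq_lintegral_mul_non_measurable π hρm.ennreal_ofReal
      (Filter.Eventually.of_forall fun x => ENNReal.ofReal_lt_top) f
    simp only [Pi.mul_apply] at h1
    rw [← h1, hwd, lintegral_smul_measure, smul_eq_mul]
  have hπtprob : IsProbabilityMeasure πt := by
    constructor
    rw [hπt, Measure.smul_apply, smul_eq_mul, withDensity_apply _ MeasurableSet.univ,
      Measure.restrict_univ, ← hc, ENNReal.inv_mul_cancel hc0 hctop]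
  -- trivial case
  rcases eq_or_ne (spectralGap π P) 0 with h0 | hne
  · rw [ge_iff_le, h0]; exact zero_le
  obtain ⟨ε, hε0, hεle⟩ := hLee (pos_iff_ne_zero.2 hne)
  have hεne : ENNReal.ofReal ε ≠ 0 := (ENNReal.ofReal_pos.2 hε0).ne'
  have hk_ne_top : (ENNReal.ofReal ε)⁻¹ * c ≠ ⊤ :=
    ENNReal.mul_ne_top (ENNReal.inv_ne_top.2 hεne) hctop
  -- π ≤ (ε⁻¹ c) • πt
  have hπle : π ≤ ((ENNReal.ofReal ε)⁻¹ * c) • πt := by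
    refine Measure.le_iff.2 fun A hA => ?_
    have h1 : ENNReal.ofReal ε * π A ≤ ∫⁻ x in A, ENNReal.ofReal (ρ x) ∂π := by
      rw [← setLIntegral_const]
      exact lintegral_mono_ae (ae_restrict_of_ae
        (hεle.mono fun x hx => ENNReal.ofReal_le_ofReal hx))
    have h2 : (((ENNReal.ofReal ε)⁻¹ * c) • πt) A
        = (ENNReal.ofReal ε)⁻¹ * ∫⁻ x in A, ENNReal.ofReal (ρ x) ∂π := by
      rw [Measure.smul_apply, smul_eq_mul, hπt, Measure.smul_apply, smul_eq_mul,
        withDensity_apply _ hA]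
      rw [mul_assoc, ← mul_assoc c c⁻¹, ENNReal.mul_inv_cancel hc0 hctop, one_mul]
    calc π A = (ENNReal.ofReal ε)⁻¹ * (ENNReal.ofReal ε * π A) := by
          rw [← mul_assoc, ENNReal.inv_mul_cancel hεne ENNReal.ofReal_ne_top, one_mul]
      _ ≤ (ENNReal.ofReal ε)⁻¹ * ∫⁻ x in A, ENNReal.ofReal (ρ x) ∂π :=
          mul_le_mul_right h1 _
      _ = (((ENNReal.ofReal ε)⁻¹ * c) • πt) A := h2.symm
  -- main inequality
  rw [ge_iff_le]
  show spectralGap π P ≤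
    ⨅ g : {g : E → ℝ // MemLp g 2 πt ∧ evariance g πt ≠ 0},
      dirichletForm πt Pt g.1 / evariance g.1 πt
  refine le_iInf fun gg => ?_
  obtain ⟨g, hg2, hgv⟩ := gg
  have hgπ : MemLp g 2 π := (hg2.smul_measure hk_ne_top).mono_measure hπle
  -- variance comparison
  have hvar : c * evariance g πt ≤ evariance g π := by
    have hmin : evariance g πt ≤ ∫⁻ x, ((‖g x - ∫ y, g y ∂π‖₊ : ℝ≥0∞)) ^ 2 ∂πt :=
      evariance_le_lintegral_sq πt hg2 _
    calc c * evariance g πt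
        ≤ c * ∫⁻ x, ((‖g x - ∫ y, g y ∂π‖₊ : ℝ≥0∞)) ^ 2 ∂πt := mul_le_mul_right hmin c
      _ = ∫⁻ x, ENNReal.ofReal (ρ x) * ((‖g x - ∫ y, g y ∂π‖₊ : ℝ≥0∞)) ^ 2 ∂π :=
          (hint _).symm
      _ ≤ ∫⁻ x, ((‖g x - ∫ y, g y ∂π‖₊ : ℝ≥0∞)) ^ 2 ∂π := lintegral_mono fun x => by
          calc ENNReal.ofReal (ρ x) * ((‖g x - ∫ y, g y ∂π‖₊ : ℝ≥0∞)) ^ 2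
              ≤ 1 * ((‖g x - ∫ y, g y ∂π‖₊ : ℝ≥0∞)) ^ 2 :=
                mul_le_mul_left (ENNReal.ofReal_le_one.2 (hρ x).2) _
            _ = _ := one_mul _
      _ = evariance g π := rfl
  have hgvπ : evariance g π ≠ 0 := by
    intro h
    have h2 : c * evariance g πt = 0 := le_antisymm (h ▸ hvar) zero_le
    exact hgv ((mul_eq_zero.1 h2).resolve_left hc0)
  -- Dirichlet form comparison
  have hx : ∀ x, ∫⁻ y, ENNReal.ofReal ((g y - g x) ^ 2) ∂(P x)
      ≤ ENNReal.ofReal (ρ x) * ∫⁻ y, ENNReal.ofReal ((g y - g x) ^ 2) ∂(Pt x) := by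
    intro x
    simp only [hP]
    rw [lintegral_add_measure, lintegral_smul_measure, lintegral_smul_measure]
    have hd : ∫⁻ y, ENNReal.ofReal ((g y - g x) ^ 2) ∂(Measure.dirac x) ≤ 0 := by
      have h3 := lintegral_dirac_le x (fun y => ENNReal.ofReal ((g y - g x) ^ 2))
      simpa using h3
    calc ENNReal.ofReal (ρ x) • ∫⁻ y, ENNReal.ofReal ((g y - g x) ^ 2) ∂(Pt x)
          + ENNReal.ofReal (1 - ρ x) • ∫⁻ y, ENNReal.ofReal ((g y - g x) ^ 2) ∂(Measure.dirac x)
        ≤ ENNReal.ofReal (ρ x) • ∫⁻ y, ENNReal.ofReal ((g y - g x) ^ 2) ∂(Pt x)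
          + ENNReal.ofReal (1 - ρ x) * 0 := by
          exact add_le_add_right (mul_le_mul_right hd _) _
      _ = ENNReal.ofReal (ρ x) * ∫⁻ y, ENNReal.ofReal ((g y - g x) ^ 2) ∂(Pt x) := by
          rw [mul_zero, add_zero, smul_eq_mul]
  have hdir : dirichletForm π P g ≤ c * dirichletForm πt Pt g := by
    simp only [dirichletForm]
    calc (1 / 2 : ℝ≥0∞) * ∫⁻ x, ∫⁻ y, ENNReal.ofReal ((g y - g x) ^ 2) ∂(P x) ∂π
        ≤ (1 / 2) * ∫⁻ x, ENNReal.ofReal (ρ x)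
            * ∫⁻ y, ENNReal.ofReal ((g y - g x) ^ 2) ∂(Pt x) ∂π :=
          mul_le_mul_right (lintegral_mono hx) _
      _ = (1 / 2) * (c * ∫⁻ x, ∫⁻ y, ENNReal.ofReal ((g y - g x) ^ 2) ∂(Pt x) ∂πt) := by
          rw [hint]
      _ = c * ((1 / 2) * ∫⁻ x, ∫⁻ y, ENNReal.ofReal ((g y - g x) ^ 2) ∂(Pt x) ∂πt) := by
          ring
  have h1 : spectralGap π P ≤ dirichletForm π P g / evariance g π := by
    show (⨅ h : {h : E → ℝ // MemLp h 2 π ∧ evariance h π ≠ 0},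
      dirichletForm π P h.1 / evariance h.1 π) ≤ _
    exact iInf_le _ (⟨g, hgπ, hgvπ⟩ : {h : E → ℝ // MemLp h 2 π ∧ evariance h π ≠ 0})
  refine h1.trans ?_
  calc dirichletForm π P g / evariance g π
      ≤ (c * dirichletForm πt Pt g) / (c * evariance g πt) := ENNReal.div_le_div hdir hvar
    _ = dirichletForm πt Pt g / evariance g πt := ENNReal.mul_div_mul_left _ _ hc0 hctop
end

section
/- Let μ(dx,du) = ν(dx)μ_x(du) on a product space X × U, let Q be a ν-reversible sub-Markov kernel on X with ρ(x) = Q(x, X), and define kernels P̄(x, A) = Q(x, A) + (1−ρ(x))1_A(x) on X and P(x,u; A) = ∫_A Q(x,dy)μ_y(dv) + (1−ρ(x))1_A(x,u) on X × U. Then min(Gap(P̄), ρ*) ≤ Gap(P) ≤ Gap(P̄), where ρ* = ν-ess inf ρ. -/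
open MeasureTheory ProbabilityTheory ENNReal

private lemma evar_congr {α : Type*} [MeasurableSpace α] {ν : Measure α} {a b : α → ℝ}
    (h : a =ᵐ[ν] b) : evariance a ν = evariance b ν := by
  rw [evariance_eq_lintegral_ofReal, evariance_eq_lintegral_ofReal, integral_congr_ae h]
  exact lintegral_congr_ae (h.mono fun x hx => by simp only [hx])

private lemma moment_expand {α : Type*} [MeasurableSpace α] (τ : Measure α)
    [IsProbabilityMeasure τ] {b : α → ℝ} (hb1 : Integrable b τ)
    (hb2 : Integrable (fun u => b u ^ 2) τ) (c : ℝ) :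
    ∫ u, (b u - c) ^ 2 ∂τ = (∫ u, b u ^ 2 ∂τ) - 2 * c * (∫ u, b u ∂τ) + c ^ 2 := by
  have h1 : (fun u => (b u - c) ^ 2) = fun u => b u ^ 2 + ((-2 * c) * b u + c ^ 2) := by
    funext u; ring
  have hg : Integrable (fun u => -2 * c * b u + c ^ 2) τ := by
    exact (hb1.const_mul _).add (integrable_const _)
  rw [h1, integral_add hb2 hg, integral_add (hb1.const_mul _) (integrable_const _),
    integral_const_mul, integral_const]
  simp only [measure_univ, ENNReal.toReal_one, probReal_univ, smul_eq_mul, one_mul, mul_one]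
  ring

private lemma moment_sq_integrable {α : Type*} [MeasurableSpace α] (τ : Measure α)
    [IsProbabilityMeasure τ] {b : α → ℝ} (hb1 : Integrable b τ)
    (hb2 : Integrable (fun u => b u ^ 2) τ) (c : ℝ) :
    Integrable (fun u => (b u - c) ^ 2) τ := by
  have h1 : (fun u => (b u - c) ^ 2) = fun u => b u ^ 2 + ((-2 * c) * b u + c ^ 2) := by
    funext u; ring
  have hg : Integrable (fun u => -2 * c * b u + c ^ 2) τ := by
    exact (hb1.const_mul _).add (integrable_const _)
  rw [h1]; exact hb2.add hg

private lemma sq_integral_le {α : Type*} [MeasurableSpace α] (τ : Measure α)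
    [IsProbabilityMeasure τ] {b : α → ℝ} (hb1 : Integrable b τ)
    (hb2 : Integrable (fun u => b u ^ 2) τ) :
    (∫ v, b v ∂τ) ^ 2 ≤ ∫ u, b u ^ 2 ∂τ := by
  have h := moment_expand τ hb1 hb2 (∫ v, b v ∂τ)
  have h0 : 0 ≤ ∫ u, (b u - ∫ v, b v ∂τ) ^ 2 ∂τ := integral_nonneg fun u => sq_nonneg _
  nlinarith [h, h0]

private lemma lmoment {α : Type*} [MeasurableSpace α] (τ : Measure α) [IsProbabilityMeasure τ]
    {b : α → ℝ} (hb1 : Integrable b τ) (hb2 : Integrable (fun u => b u ^ 2) τ) (c : ℝ) :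
    ∫⁻ u, ENNReal.ofReal ((b u - c) ^ 2) ∂τ
      = (∫⁻ u, ENNReal.ofReal ((b u - ∫ v, b v ∂τ) ^ 2) ∂τ)
        + ENNReal.ofReal (((∫ v, b v ∂τ) - c) ^ 2) := by
  set m := ∫ v, b v ∂τ with hm
  have key : ∫ u, (b u - c) ^ 2 ∂τ = (∫ u, (b u - m) ^ 2 ∂τ) + (m - c) ^ 2 := by
    rw [moment_expand τ hb1 hb2 c, moment_expand τ hb1 hb2 m]; ring
  rw [← ofReal_integral_eq_lintegral_ofReal (moment_sq_integrable τ hb1 hb2 c)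
      (Filter.Eventually.of_forall fun u => sq_nonneg _),
    ← ofReal_integral_eq_lintegral_ofReal (moment_sq_integrable τ hb1 hb2 m)
      (Filter.Eventually.of_forall fun u => sq_nonneg _),
    ← ENNReal.ofReal_add (integral_nonneg fun u => sq_nonneg _) (sq_nonneg _), key]

section Rev

variable {X U : Type*} [MeasurableSpace X] [MeasurableSpace U]
variable {ν : Measure X} [IsProbabilityMeasure ν] {κ : ProbabilityTheory.Kernel X U}
variable [ProbabilityTheory.IsMarkovKernel κ]
variable {Q : ProbabilityTheory.Kernel X X} [ProbabilityTheory.IsSFiniteKernel Q]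

private lemma compProd_univ_le (hsub : ∀ x, Q x Set.univ ≤ 1) : (ν ⊗ₘ Q) Set.univ ≤ 1 := by
  rw [← Set.univ_prod_univ, Measure.compProd_apply_prod MeasurableSet.univ MeasurableSet.univ,
    Measure.restrict_univ]
  calc ∫⁻ x, Q x Set.univ ∂ν ≤ ∫⁻ _x, 1 ∂ν := lintegral_mono hsub
    _ = 1 := by simp

private lemma map_swap_eq (hsub : ∀ x, Q x Set.univ ≤ 1)
    (hrev : ∀ A B : Set X, MeasurableSet A → MeasurableSet B →
      ∫⁻ x in A, Q x B ∂ν = ∫⁻ x in B, Q x A ∂ν) :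
    (ν ⊗ₘ Q).map Prod.swap = ν ⊗ₘ Q := by
  have hfin : ∀ A B : Set X, MeasurableSet A → MeasurableSet B →
      ((ν ⊗ₘ Q).map Prod.swap) (A ×ˢ B) = (ν ⊗ₘ Q) (A ×ˢ B) := by
    intro A B hA hB
    rw [Measure.map_apply measurable_swap (hA.prod hB), Set.preimage_swap_prod,
      Measure.compProd_apply_prod hB hA, Measure.compProd_apply_prod hA hB, hrev B A hB hA]
  refine Measure.FiniteSpanningSetsIn.ext generateFrom_prod.symm isPiSystem_prod ?_ ?_
  · refine ⟨fun _ => Set.univ ×ˢ Set.univ,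
      fun _ => Set.mem_image2_of_mem MeasurableSet.univ MeasurableSet.univ, fun _ => ?_, by
        simp [Set.iUnion_const]⟩
    rw [hfin _ _ MeasurableSet.univ MeasurableSet.univ, Set.univ_prod_univ]
    exact lt_of_le_of_lt (compProd_univ_le hsub) one_lt_top
  · rintro s ⟨A, hA, B, hB, rfl⟩
    exact hfin A B hA hB

private lemma lintegral_swapQ (hsub : ∀ x, Q x Set.univ ≤ 1)
    (hrev : ∀ A B : Set X, MeasurableSet A → MeasurableSet B →
      ∫⁻ x in A, Q x B ∂ν = ∫⁻ x in B, Q x A ∂ν)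
    {F : X × X → ℝ≥0∞} (hF : Measurable F) :
    ∫⁻ x, ∫⁻ y, F (x, y) ∂Q x ∂ν = ∫⁻ x, ∫⁻ y, F (y, x) ∂Q x ∂ν := by
  have h1 := Measure.lintegral_compProd (μ := ν) (κ := Q) hF
  have h2 := Measure.lintegral_compProd (μ := ν) (κ := Q) (hF.comp measurable_swap)
  simp only [Function.comp, Prod.swap_prod_mk] at h2
  rw [← h1, ← h2]
  calc ∫⁻ p, F p ∂(ν ⊗ₘ Q) = ∫⁻ p, F p ∂((ν ⊗ₘ Q).map Prod.swap) := by
        rw [map_swap_eq hsub hrev]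
    _ = ∫⁻ p, F (Prod.swap p) ∂(ν ⊗ₘ Q) := lintegral_map hF measurable_swap
    _ = ∫⁻ p, F p.swap ∂(ν ⊗ₘ Q) := rfl

private lemma Q_null (hsub : ∀ x, Q x Set.univ ≤ 1)
    (hrev : ∀ A B : Set X, MeasurableSet A → MeasurableSet B →
      ∫⁻ x in A, Q x B ∂ν = ∫⁻ x in B, Q x A ∂ν)
    {s : Set X} (hs : MeasurableSet s) (h : ν s = 0) : ∀ᵐ x ∂ν, Q x s = 0 := by
  have h0 : ∫⁻ x, Q x s ∂ν = 0 := by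
    have hr := hrev Set.univ s MeasurableSet.univ hs
    rw [Measure.restrict_univ] at hr
    rw [hr]
    refine le_antisymm ?_ zero_le
    calc ∫⁻ x in s, Q x Set.univ ∂ν ≤ ∫⁻ _x in s, 1 ∂ν := lintegral_mono fun x => hsub x
      _ = ν s := by simp
      _ = 0 := h
  have := (lintegral_eq_zero_iff (Q.measurable_coe hs)).mp h0
  filter_upwards [this] with x hx using hx

private lemma Q_ae (hsub : ∀ x, Q x Set.univ ≤ 1)
    (hrev : ∀ A B : Set X, MeasurableSet A → MeasurableSet B →
      ∫⁻ x in A, Q x B ∂ν = ∫⁻ x in B, Q x A ∂ν)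
    {p : X → Prop} (hp : ∀ᵐ x ∂ν, p x) : ∀ᵐ x ∂ν, ∀ᵐ y ∂Q x, p y := by
  have hνs : ν (toMeasurable ν {x | ¬ p x}) = 0 := by
    rw [measure_toMeasurable]; exact hp
  filter_upwards [Q_null hsub hrev (measurableSet_toMeasurable _ _) hνs] with x hx
  exact measure_mono_null (fun y hy => subset_toMeasurable _ _ hy) hx

private lemma QK_null (hsub : ∀ x, Q x Set.univ ≤ 1)
    (hrev : ∀ A B : Set X, MeasurableSet A → MeasurableSet B →
      ∫⁻ x in A, Q x B ∂ν = ∫⁻ x in B, Q x A ∂ν)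
    {N : Set (X × U)} (hN : MeasurableSet N) (h : (ν ⊗ₘ κ) N = 0) :
    ∀ᵐ x ∂ν, ((Q x) ⊗ₘ κ) N = 0 := by
  set t : X → ℝ≥0∞ := fun y => κ y (Prod.mk y ⁻¹' N) with htdef
  have htm : Measurable t := ProbabilityTheory.Kernel.measurable_kernel_prodMk_left hN
  have ht0 : t =ᵐ[ν] 0 := by
    refine (lintegral_eq_zero_iff htm).mp ?_
    rw [← Measure.compProd_apply hN]; exact h
  have hQN : ∀ x, ((Q x) ⊗ₘ κ) N = ∫⁻ y, t y ∂Q x := fun x => Measure.compProd_apply hN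
  have hswap := lintegral_swapQ hsub hrev (F := fun p => t p.2) (htm.comp measurable_snd)
  have hz : ∫⁻ x, ∫⁻ y, t y ∂Q x ∂ν = 0 := by
    rw [hswap]
    have he : (fun x => ∫⁻ _y, t x ∂Q x) =ᵐ[ν] 0 := by
      filter_upwards [ht0] with x hx
      simp [lintegral_const, hx]
    rw [lintegral_congr_ae he]; simp
  have hm2 : Measurable fun x => ∫⁻ y, t y ∂Q x := Measurable.lintegral_kernel htm
  filter_upwards [(lintegral_eq_zero_iff hm2).mp hz] with x hx
  rw [hQN x]; exact hx

private lemma ae_fst_lift {p : X → Prop} (hp : ∀ᵐ x ∂ν, p x) :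
    ∀ᵐ q ∂(ν ⊗ₘ κ), p q.1 := by
  set s := toMeasurable ν {x | ¬ p x} with hsdef
  have hs : MeasurableSet s := measurableSet_toMeasurable _ _
  have hνs : ν s = 0 := by rw [measure_toMeasurable]; exact hp
  have hnull : (ν ⊗ₘ κ) (s ×ˢ Set.univ) = 0 := by
    rw [Measure.compProd_apply_prod hs MeasurableSet.univ]
    calc ∫⁻ x in s, κ x Set.univ ∂ν = ∫⁻ _x in s, 1 ∂ν := by
          simp [measure_univ]
      _ = ν s := by simp
      _ = 0 := hνs
  refine measure_mono_null (fun q hq => ?_) hnull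
  exact ⟨subset_toMeasurable _ _ hq, Set.mem_univ _⟩

end Rev

set_option maxHeartbeats 1000000 in
/-- Let `μ(dx,du) = ν(dx)μ_x(du)` on `X × U` (with `{μ_x}` given by a Markov kernel `κ`),
let `Q` be a `ν`-reversible sub-Markov kernel on `X` with `ρ(x) = Q(x,X)`, and define
`P̄(x,·) = Q(x,·) + (1−ρ(x)) δ_x` on `X` and
`P(x,u;·) = (Q x) ⊗ₘ κ + (1−ρ(x)) δ_{(x,u)}` on `X × U`. Then
`min(Gap(P̄), ρ*) ≤ Gap(P) ≤ Gap(P̄)`, where `ρ* = ν`-ess inf `ρ`. -/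
theorem stmt11 {X U : Type*} [MeasurableSpace X] [MeasurableSpace U]
    (ν : Measure X) [IsProbabilityMeasure ν] (κ : ProbabilityTheory.Kernel X U)
    [ProbabilityTheory.IsMarkovKernel κ]
    (Q : ProbabilityTheory.Kernel X X) [ProbabilityTheory.IsSFiniteKernel Q]
    (hsub : ∀ x, Q x Set.univ ≤ 1)
    (hrev : ∀ A B : Set X, MeasurableSet A → MeasurableSet B →
      ∫⁻ x in A, Q x B ∂ν = ∫⁻ x in B, Q x A ∂ν) :
    min (spectralGap ν (fun x => Q x + (1 - Q x Set.univ) • Measure.dirac x))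
        (essInf (fun x => Q x Set.univ) ν)
      ≤ spectralGap (ν.compProd κ)
          (fun p => (Q p.1).compProd κ + (1 - Q p.1 Set.univ) • Measure.dirac p) ∧
    spectralGap (ν.compProd κ)
        (fun p => (Q p.1).compProd κ + (1 - Q p.1 Set.univ) • Measure.dirac p)
      ≤ spectralGap ν (fun x => Q x + (1 - Q x Set.univ) • Measure.dirac x) := by
  haveI hQfin : ∀ x, IsFiniteMeasure (Q x) := fun x => ⟨lt_of_le_of_lt (hsub x) one_lt_top⟩
  set Pb : X → Measure X := fun x => Q x + (1 - Q x Set.univ) • Measure.dirac x with hPbdef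
  set Pp : X × U → Measure (X × U) :=
    fun p => (Q p.1).compProd κ + (1 - Q p.1 Set.univ) • Measure.dirac p with hPpdef
  constructor
  · -- LOWER BOUND
    simp only [spectralGap]
    refine le_iInf fun fe => ?_
    obtain ⟨f, hfmem, hfvar⟩ := fe
    dsimp only
    set g : X × U → ℝ := hfmem.1.mk f with hgdef
    have hgsm : StronglyMeasurable g := hfmem.1.stronglyMeasurable_mk
    have hae : f =ᵐ[ν.compProd κ] g := hfmem.1.ae_eq_mk
    have hgmem : MemLp g 2 (ν.compProd κ) := hfmem.ae_eq hae
    have hgm : Measurable g := hgsm.measurable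
    set m : X → ℝ := fun x => ∫ u, g (x, u) ∂κ x with hmdef
    have hmsm : StronglyMeasurable m := hgsm.integral_kernel_prod_right'
    have hmm : Measurable m := hmsm.measurable
    set Hf : X → ℝ≥0∞ := fun x => ∫⁻ u, ENNReal.ofReal ((g (x, u) - m x) ^ 2) ∂κ x with hHdef
    have hHinteg : Measurable fun q : X × U => ENNReal.ofReal ((g q - m q.1) ^ 2) :=
      ENNReal.measurable_ofReal.comp ((hgm.sub (hmm.comp measurable_fst)).pow_const 2)
    have hHm : Measurable Hf := Measurable.lintegral_kernel_prod_right' (κ := κ) hHinteg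
    -- sections are integrable
    have hgint : Integrable g (ν.compProd κ) := hgmem.integrable one_le_two
    have hgsq : Integrable (fun p : X × U => g p ^ 2) (ν.compProd κ) := hgmem.integrable_sq
    have hgood : ∀ᵐ x ∂ν, Integrable (fun u => g (x, u)) (κ x) ∧
        Integrable (fun u => g (x, u) ^ 2) (κ x) := by
      have h1 := ((Measure.integrable_compProd_iff hgint.aestronglyMeasurable).mp hgint).1
      have h2 := ((Measure.integrable_compProd_iff hgsq.aestronglyMeasurable).mp hgsq).1
      filter_upwards [h1, h2] with x hx1 hx2 using ⟨hx1, hx2⟩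
    have hPt : ∀ x, (Integrable (fun u => g (x, u)) (κ x) ∧
        Integrable (fun u => g (x, u) ^ 2) (κ x)) → ∀ c : ℝ,
        ∫⁻ u, ENNReal.ofReal ((g (x, u) - c) ^ 2) ∂κ x
          = Hf x + ENNReal.ofReal ((m x - c) ^ 2) := by
      intro x hx c
      exact lmoment (κ x) hx.1 hx.2 c
    -- variance decomposition
    have hceq : ∫ p, g p ∂(ν.compProd κ) = ∫ x, m x ∂ν := Measure.integral_compProd hgint
    have hvardec : evariance g (ν.compProd κ) = (∫⁻ x, Hf x ∂ν) + evariance m ν := by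
      rw [evariance_eq_lintegral_ofReal, evariance_eq_lintegral_ofReal, hceq]
      have hintm : Measurable fun p : X × U =>
          ENNReal.ofReal ((g p - ∫ x, m x ∂ν) ^ 2) :=
        ENNReal.measurable_ofReal.comp ((hgm.sub measurable_const).pow_const 2)
      rw [Measure.lintegral_compProd hintm]
      have hstep : ∫⁻ x, ∫⁻ u, ENNReal.ofReal ((g (x, u) - ∫ x, m x ∂ν) ^ 2) ∂κ x ∂ν
          = ∫⁻ x, (Hf x + ENNReal.ofReal ((m x - ∫ x, m x ∂ν) ^ 2)) ∂ν :=
        lintegral_congr_ae (hgood.mono fun x hx => hPt x hx _)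
      rw [hstep, lintegral_add_left hHm]
    have hVar : evariance f (ν.compProd κ) = (∫⁻ x, Hf x ∂ν) + evariance m ν := by
      rw [evar_congr hae, hvardec]
    have hVarTop : evariance f (ν.compProd κ) ≠ ⊤ := by
      rw [evar_congr hae]; exact hgmem.evariance_lt_top.ne
    have hBfin : evariance m ν ≠ ⊤ := fun hB => hVarTop (by rw [hVar, hB, add_top])
    -- m is in L²(ν)
    have hGint : Integrable (fun x => ∫ u, g (x, u) ^ 2 ∂κ x) ν := by
      have hgsq' : Integrable (fun p : X × U => g p ^ 2)
          ((Kernel.const Unit ν ⊗ₖ Kernel.prodMkLeft Unit κ) ()) := hgsq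
      exact hgsq'.integral_compProd
    have hm2 : Integrable (fun x => m x ^ 2) ν := by
      refine hGint.mono ((hmm.pow_const 2).aestronglyMeasurable) ?_
      filter_upwards [hgood] with x hx
      rw [Real.norm_eq_abs, Real.norm_eq_abs, abs_of_nonneg (sq_nonneg _),
        abs_of_nonneg (integral_nonneg fun u => sq_nonneg _)]
      exact sq_integral_le (κ x) hx.1 hx.2
    have hmmem : MemLp m 2 ν := (memLp_two_iff_integrable_sq hmsm.aestronglyMeasurable).mpr hm2
    -- Dirichlet form decomposition
    set T3 : X → ℝ≥0∞ := fun x => ∫⁻ y, ENNReal.ofReal ((m x - m y) ^ 2) ∂Q x with hT3def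
    have hT3integ : Measurable fun q : X × X => ENNReal.ofReal ((m q.1 - m q.2) ^ 2) :=
      ENNReal.measurable_ofReal.comp
        (((hmm.comp measurable_fst).sub (hmm.comp measurable_snd)).pow_const 2)
    have hT3m : Measurable T3 := Measurable.lintegral_kernel_prod_right' (κ := Q) hT3integ
    have hT1m : Measurable (fun x => ∫⁻ y, Hf y ∂Q x) :=
      Measurable.lintegral_kernel (κ := Q) hHm
    have hρm : Measurable (fun x => Q x Set.univ) := Q.measurable_coe MeasurableSet.univ
    set INg : X × U → ℝ≥0∞ :=
      fun p => ∫⁻ q, ENNReal.ofReal ((g q - g p) ^ 2) ∂((Q p.1).compProd κ) with hINdef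
    set ηK : ProbabilityTheory.Kernel X (X × U) := Q ⊗ₖ (Kernel.prodMkLeft X κ) with hηdef
    have hηap : ∀ x, ηK x = (Q x).compProd κ := by
      intro x
      ext s hs
      rw [hηdef, Kernel.compProd_apply hs, Measure.compProd_apply hs]
      rfl
    have hINinteg : Measurable fun r : (X × U) × (X × U) =>
        ENNReal.ofReal ((g r.2 - g r.1) ^ 2) :=
      ENNReal.measurable_ofReal.comp
        (((hgm.comp measurable_snd).sub (hgm.comp measurable_fst)).pow_const 2)
    have hINm : Measurable INg := by
      set K2 : ProbabilityTheory.Kernel (X × U) (X × U) :=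
        ηK.comap Prod.fst (measurable_fst : Measurable (Prod.fst : X × U → X)) with hK2def
      have heq : INg = fun p => ∫⁻ q, ENNReal.ofReal ((g q - g p) ^ 2) ∂(K2 p) := by
        funext p
        rw [hK2def, Kernel.comap_apply, hηap]
      rw [heq]
      exact Measurable.lintegral_kernel_prod_right' (κ := K2) hINinteg
    -- step (i): drop the dirac part
    have hstep1 : (1 / 2 : ℝ≥0∞) * ∫⁻ p, INg p ∂(ν.compProd κ)
        ≤ dirichletForm (ν.compProd κ) Pp f := by
      have hINf : ∫⁻ p, (∫⁻ q, ENNReal.ofReal ((f q - f p) ^ 2) ∂((Q p.1).compProd κ))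
          ∂(ν.compProd κ) = ∫⁻ p, INg p ∂(ν.compProd κ) := by
        have hNnull : (ν.compProd κ) (toMeasurable (ν.compProd κ) {p | f p ≠ g p}) = 0 := by
          rw [measure_toMeasurable]; exact hae
        have hQKN := QK_null hsub hrev
          (measurableSet_toMeasurable (ν.compProd κ) {p | f p ≠ g p}) hNnull
        have hlift := ae_fst_lift (κ := κ) hQKN
        refine lintegral_congr_ae ?_
        filter_upwards [hae, hlift] with p hp hNp
        refine lintegral_congr_ae ?_
        have hqq : ∀ᵐ q ∂((Q p.1).compProd κ), f q = g q := by
          refine measure_mono_null (fun q hq => subset_toMeasurable _ _ hq) hNp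
        exact hqq.mono fun q hq => by simp only [hq, hp]
      rw [← hINf]
      simp only [dirichletForm]
      refine mul_le_mul_right (lintegral_mono fun p => ?_) _
      rw [show Pp p = (Q p.1).compProd κ + (1 - Q p.1 Set.univ) • Measure.dirac p from rfl,
        lintegral_add_measure]
      exact le_self_add
    -- step (ii): compute ∫ INg
    have hstepbc : ∀ᵐ x ∂ν, ∫⁻ u, INg (x, u) ∂κ x
        = (∫⁻ y, Hf y ∂Q x) + ((Q x Set.univ) * Hf x + T3 x) := by
      filter_upwards [Q_ae hsub hrev hgood, hgood] with x hQx hx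
      have hval : ∀ u, INg (x, u) = ∫⁻ y, (Hf y
          + ENNReal.ofReal ((m y - g (x, u)) ^ 2)) ∂Q x := by
        intro u
        have hint2 : Measurable fun q : X × U => ENNReal.ofReal ((g q - g (x, u)) ^ 2) :=
          ENNReal.measurable_ofReal.comp ((hgm.sub measurable_const).pow_const 2)
        rw [show INg (x, u) = ∫⁻ q, ENNReal.ofReal ((g q - g (x, u)) ^ 2)
            ∂((Q x).compProd κ) from rfl, Measure.lintegral_compProd hint2]
        exact lintegral_congr_ae (hQx.mono fun y hy => hPt y hy (g (x, u)))
      calc ∫⁻ u, INg (x, u) ∂κ x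
          = ∫⁻ u, ∫⁻ y, (Hf y + ENNReal.ofReal ((m y - g (x, u)) ^ 2)) ∂Q x ∂κ x :=
            lintegral_congr fun u => hval u
        _ = ∫⁻ y, ∫⁻ u, (Hf y + ENNReal.ofReal ((m y - g (x, u)) ^ 2)) ∂κ x ∂Q x := by
            have hunc : Measurable (fun r : U × X =>
                Hf r.2 + ENNReal.ofReal ((m r.2 - g (x, r.1)) ^ 2)) := by
              refine Measurable.add (hHm.comp measurable_snd) ?_
              refine ENNReal.measurable_ofReal.comp ?_
              exact ((hmm.comp measurable_snd).sub
                (hgm.comp (measurable_prodMk_left.comp measurable_fst))).pow_const 2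
            exact lintegral_lintegral_swap hunc.aemeasurable
        _ = ∫⁻ y, (Hf y + (Hf x + ENNReal.ofReal ((m x - m y) ^ 2))) ∂Q x := by
            refine lintegral_congr fun y => ?_
            rw [lintegral_add_left measurable_const, lintegral_const]
            simp only [measure_univ, mul_one]
            congr 1
            have hflip : ∀ u, ((m y - g (x, u)) ^ 2) = ((g (x, u) - m y) ^ 2) :=
              fun u => by ring
            simp_rw [hflip]
            exact hPt x hx (m y)
        _ = (∫⁻ y, Hf y ∂Q x) + ∫⁻ y, (Hf x + ENNReal.ofReal ((m x - m y) ^ 2)) ∂Q x :=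
            lintegral_add_left hHm _
        _ = (∫⁻ y, Hf y ∂Q x) + ((Q x Set.univ) * Hf x + T3 x) := by
            rw [lintegral_add_left measurable_const, lintegral_const, mul_comm]
    have hL : ∫⁻ p, INg p ∂(ν.compProd κ)
        = (∫⁻ x, (Q x Set.univ) * Hf x ∂ν)
          + ((∫⁻ x, (Q x Set.univ) * Hf x ∂ν) + ∫⁻ x, T3 x ∂ν) := by
      rw [Measure.lintegral_compProd hINm, lintegral_congr_ae hstepbc,
        lintegral_add_left hT1m, lintegral_add_left (f := fun x => Q x Set.univ * Hf x) (hρm.mul hHm)]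
      congr 1
      have hs := lintegral_swapQ hsub hrev (F := fun q : X × X => Hf q.2)
        (hHm.comp measurable_snd)
      rw [hs]
      refine lintegral_congr fun x => ?_
      simp only [lintegral_const]
      rw [mul_comm]
    -- step (iii): Dirichlet form of m for Pb
    have hdfm : dirichletForm ν Pb m = (1 / 2 : ℝ≥0∞) * ∫⁻ x, T3 x ∂ν := by
      simp only [dirichletForm]
      congr 1
      refine lintegral_congr fun x => ?_
      have hmeasx : Measurable fun y => ENNReal.ofReal ((m y - m x) ^ 2) :=
        ENNReal.measurable_ofReal.comp ((hmm.sub measurable_const).pow_const 2)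
      rw [show Pb x = Q x + (1 - Q x Set.univ) • Measure.dirac x from rfl,
        lintegral_add_measure, lintegral_smul_measure, lintegral_dirac' x hmeasx]
      simp only [sub_self, ne_eq, OfNat.ofNat_ne_zero, not_false_eq_true, zero_pow,
        ENNReal.ofReal_zero, mul_zero, smul_zero, add_zero]
      refine lintegral_congr fun y => ?_
      rw [show (m y - m x) ^ 2 = (m x - m y) ^ 2 from by ring]
    -- assemble the lower bound on the Dirichlet form
    have hdf_ge : (∫⁻ x, (Q x Set.univ) * Hf x ∂ν) + dirichletForm ν Pb m
        ≤ dirichletForm (ν.compProd κ) Pp f := by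
      refine le_trans ?_ hstep1
      rw [hL, hdfm]
      rw [mul_add, mul_add]
      rw [← add_assoc]
      refine add_le_add_left ?_ _
      have h2 : (1 / 2 : ℝ≥0∞) * (∫⁻ x, (Q x Set.univ) * Hf x ∂ν)
          + (1 / 2 : ℝ≥0∞) * (∫⁻ x, (Q x Set.univ) * Hf x ∂ν)
          = ∫⁻ x, (Q x Set.univ) * Hf x ∂ν := by
        rw [← add_mul, ENNReal.add_halves, one_mul]
      rw [h2]
    -- conclude
    rw [ENNReal.le_div_iff_mul_le (Or.inl hfvar) (Or.inl hVarTop), hVar, mul_add]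
    refine le_trans (add_le_add ?_ ?_) hdf_ge
    · calc (min (⨅ g : {g : X → ℝ // MemLp g 2 ν ∧ evariance g ν ≠ 0},
            dirichletForm ν Pb g.1 / evariance g.1 ν)
            (essInf (fun x => Q x Set.univ) ν)) * ∫⁻ x, Hf x ∂ν
          ≤ essInf (fun x => Q x Set.univ) ν * ∫⁻ x, Hf x ∂ν :=
            mul_le_mul_left (min_le_right _ _) _
        _ = ∫⁻ x, essInf (fun x => Q x Set.univ) ν * Hf x ∂ν :=
            (lintegral_const_mul _ hHm).symm
        _ ≤ ∫⁻ x, (Q x Set.univ) * Hf x ∂ν := by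
            refine lintegral_mono_ae ?_
            filter_upwards [ae_essInf_le (f := fun x => Q x Set.univ) (μ := ν)] with x hx
            exact mul_le_mul_left hx _
    · rcases eq_or_ne (evariance m ν) 0 with h0 | h0
      · rw [h0, mul_zero]; exact zero_le
      · have hle : (⨅ g : {g : X → ℝ // MemLp g 2 ν ∧ evariance g ν ≠ 0},
            dirichletForm ν Pb g.1 / evariance g.1 ν)
            ≤ dirichletForm ν Pb m / evariance m ν := iInf_le _ (⟨m, hmmem, h0⟩ : {g : X → ℝ // MemLp g 2 ν ∧ evariance g ν ≠ 0})
        have hmul := (ENNReal.le_div_iff_mul_le (Or.inl h0) (Or.inl hBfin)).mp hle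
        exact le_trans (mul_le_mul_left (min_le_left _ _) _) hmul
  · -- UPPER BOUND
    simp only [spectralGap]
    refine le_iInf fun ge => ?_
    obtain ⟨gb, hgbmem, hgbvar⟩ := ge
    dsimp only
    set gg : X → ℝ := hgbmem.1.mk gb with hggdef
    have hggsm : StronglyMeasurable gg := hgbmem.1.stronglyMeasurable_mk
    have hae : gb =ᵐ[ν] gg := hgbmem.1.ae_eq_mk
    have hggmem : MemLp gg 2 ν := hgbmem.ae_eq hae
    have hggm : Measurable gg := hggsm.measurable
    set f : X × U → ℝ := fun p => gg p.1 with hfdef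
    have hmap : (ν.compProd κ).map Prod.fst = ν := by
      rw [show (ν.compProd κ).map Prod.fst = (ν.compProd κ).fst from rfl,
        Measure.fst_compProd]
    have hgg' : AEStronglyMeasurable gg ((ν.compProd κ).map Prod.fst) :=
      hmap.symm ▸ hggmem.aestronglyMeasurable
    have hfmem : MemLp f 2 (ν.compProd κ) := by
      have := (memLp_map_measure_iff hgg' measurable_fst.aemeasurable).mp
        (hmap.symm ▸ hggmem)
      exact this
    have hc : ∫ x, gg x ∂ν = ∫ p, f p ∂(ν.compProd κ) := by
      conv_lhs => rw [← hmap]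
      exact integral_map measurable_fst.aemeasurable hgg'
    have hlin : ∀ c : ℝ, ∫⁻ p, ENNReal.ofReal ((f p - c) ^ 2) ∂(ν.compProd κ)
        = ∫⁻ x, ENNReal.ofReal ((gg x - c) ^ 2) ∂ν := by
      intro c
      have hgmeas : Measurable fun x : X => ENNReal.ofReal ((gg x - c) ^ 2) :=
        ENNReal.measurable_ofReal.comp ((hggm.sub measurable_const).pow_const 2)
      conv_rhs => rw [← hmap]
      exact ((lintegral_map hgmeas (measurable_fst (β := U))).symm : _)
    have hvar_eq : evariance f (ν.compProd κ) = evariance gg ν := by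
      rw [evariance_eq_lintegral_ofReal, evariance_eq_lintegral_ofReal, hc]
      exact hlin _
    have hvar_eq2 : evariance gg ν = evariance gb ν := (evar_congr hae).symm
    set W : X → ℝ≥0∞ := fun x => ∫⁻ y, ENNReal.ofReal ((gg y - gg x) ^ 2) ∂Q x with hWdef
    have hWinteg : Measurable fun q : X × X => ENNReal.ofReal ((gg q.2 - gg q.1) ^ 2) :=
      ENNReal.measurable_ofReal.comp
        (((hggm.comp measurable_snd).sub (hggm.comp measurable_fst)).pow_const 2)
    have hW : Measurable W := Measurable.lintegral_kernel_prod_right' (κ := Q) hWinteg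
    have hdfP : dirichletForm (ν.compProd κ) Pp f = (1 / 2 : ℝ≥0∞) * ∫⁻ x, W x ∂ν := by
      simp only [dirichletForm]
      congr 1
      have hstep : ∀ p : X × U,
          ∫⁻ q, ENNReal.ofReal ((f q - f p) ^ 2) ∂(Pp p) = W p.1 := by
        intro p
        have hmeas : Measurable fun q : X × U => ENNReal.ofReal ((f q - f p) ^ 2) :=
          ENNReal.measurable_ofReal.comp
            (((hggm.comp measurable_fst).sub measurable_const).pow_const 2)
        rw [show Pp p = (Q p.1).compProd κ + (1 - Q p.1 Set.univ) • Measure.dirac p from rfl,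
          lintegral_add_measure, lintegral_smul_measure, lintegral_dirac' p hmeas,
          Measure.lintegral_compProd hmeas]
        simp only [sub_self, ne_eq, OfNat.ofNat_ne_zero, not_false_eq_true, zero_pow,
          ENNReal.ofReal_zero, mul_zero, smul_zero, add_zero]
        refine lintegral_congr fun y => ?_
        simp only [hfdef]
        simp [lintegral_const, measure_univ]
      have hWfst : Measurable fun p : X × U => W p.1 := hW.comp measurable_fst
      rw [lintegral_congr hstep, Measure.lintegral_compProd hWfst]
      refine lintegral_congr fun x => ?_
      simp [lintegral_const, measure_univ]
    have hdfPb : (1 / 2 : ℝ≥0∞) * ∫⁻ x, W x ∂ν ≤ dirichletForm ν Pb gb := by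
      simp only [dirichletForm]
      refine mul_le_mul_right ?_ _
      calc ∫⁻ x, W x ∂ν
          = ∫⁻ x, ∫⁻ y, ENNReal.ofReal ((gb y - gb x) ^ 2) ∂Q x ∂ν := by
            refine lintegral_congr_ae ?_
            filter_upwards [hae, Q_ae hsub hrev hae] with x hx hQx
            exact lintegral_congr_ae (hQx.mono fun y hy => by simp only [hx, hy])
        _ ≤ ∫⁻ x, ∫⁻ y, ENNReal.ofReal ((gb y - gb x) ^ 2) ∂(Pb x) ∂ν := by
            refine lintegral_mono fun x => ?_
            rw [show Pb x = Q x + (1 - Q x Set.univ) • Measure.dirac x from rfl,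
              lintegral_add_measure]
            exact le_self_add
    calc (⨅ fe : {f : X × U → ℝ // MemLp f 2 (ν.compProd κ)
            ∧ evariance f (ν.compProd κ) ≠ 0},
          dirichletForm (ν.compProd κ) Pp fe.1 / evariance fe.1 (ν.compProd κ))
        ≤ dirichletForm (ν.compProd κ) Pp f / evariance f (ν.compProd κ) :=
          iInf_le _ (⟨f, hfmem, by rw [hvar_eq, hvar_eq2]; exact hgbvar⟩ :
            {f : X × U → ℝ // MemLp f 2 (ν.compProd κ) ∧ evariance f (ν.compProd κ) ≠ 0})
      _ = dirichletForm (ν.compProd κ) Pp f / evariance gb ν := by rw [hvar_eq, hvar_eq2]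
      _ ≤ dirichletForm ν Pb gb / evariance gb ν := by
          refine ENNReal.div_le_div_right ?_ _
          rw [hdfP]; exact hdfPb
end

section
/- Let Q be a probability measure on [0,∞) with ∫ u dQ(u) = 1 and second moment s̄ = ∫ u² dQ(u) < ∞. Define ρ_U(u) = ∫ min(1, v/u) dQ(v). Then 1/(s̄ + u) ≤ ρ_U(u) ≤ min(1, 1/u) for all u ≥ 0, and ∫ u·ρ_U(u) dQ(u) ≥ 1/(2s̄). -/
open MeasureTheory ProbabilityTheory ENNReal

/-- Let `Q` be a probability measure on `[0,∞)` with mean `1` and finite second moment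
`s̄ = ∫ u² dQ(u)`. Define `ρ_U(u) = ∫ min(1, v/u) dQ(v)`. Then
`1/(s̄ + u) ≤ ρ_U(u) ≤ min(1, 1/u)` for all `u > 0`, and
`∫ u·ρ_U(u) dQ(u) ≥ 1/(2s̄)`. -/
theorem stmt13 (Q : Measure ℝ) [IsProbabilityMeasure Q] (hpos : ∀ᵐ v ∂Q, 0 ≤ v)
    (hint : Integrable (fun v => v) Q) (hmean : ∫ v, v ∂Q = 1)
    (hint2 : Integrable (fun v => v ^ 2) Q) (sbar : ℝ) (hs : sbar = ∫ v, v ^ 2 ∂Q) :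
    (∀ u : ℝ, 0 < u →
      1 / (sbar + u) ≤ ∫ v, min 1 (v / u) ∂Q ∧ ∫ v, min 1 (v / u) ∂Q ≤ min 1 (1 / u)) ∧
    1 / (2 * sbar) ≤ ∫ u, u * ∫ v, min 1 (v / u) ∂Q ∂Q := by
  -- sbar ≥ 1
  have hs1 : (1:ℝ) ≤ sbar := by
    have h0 : 0 ≤ ∫ v, ((v:ℝ) - 1)^2 ∂Q := integral_nonneg fun v => sq_nonneg _
    have he : (fun v : ℝ => (v - 1)^2) = fun v => v^2 - 2*v + 1 := by funext v; ring
    rw [he, integral_add (show Integrable (fun v : ℝ => v^2 - 2*v) Q from hint2.sub (hint.const_mul 2)) (integrable_const 1),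
        integral_sub hint2 (hint.const_mul 2), integral_const_mul _ _, hmean,
        integral_const] at h0
    simp at h0
    linarith [hs ▸ h0]
  have hs0 : (0:ℝ) < sbar := lt_of_lt_of_le one_pos hs1
  have hmeasmin : ∀ u : ℝ, AEStronglyMeasurable (fun v => min 1 (v/u)) Q :=
    fun u => (measurable_const.min (measurable_id.div_const u)).aestronglyMeasurable
  have hbound : ∀ u : ℝ, 0 ≤ u → ∀ᵐ v ∂Q, ‖min 1 (v/u)‖ ≤ 1 := by
    intro u hu
    filter_upwards [hpos] with v hv
    rw [Real.norm_eq_abs, abs_le]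
    exact ⟨by nlinarith [(le_min one_pos.le (div_nonneg hv hu) : (0:ℝ) ≤ min 1 (v/u))],
      min_le_left _ _⟩
  have hIntmin : ∀ u : ℝ, 0 ≤ u → Integrable (fun v => min 1 (v/u)) Q :=
    fun u hu => Integrable.mono' (integrable_const 1) (hmeasmin u) (hbound u hu)
  have hrho01 : ∀ u : ℝ, 0 ≤ u → |∫ v, min 1 (v/u) ∂Q| ≤ 1 := by
    intro u hu
    have := norm_integral_le_of_norm_le_const (hbound u hu) (f := fun v => min 1 (v/u))
    simpa using this
  -- pointwise key inequality
  have hkey : ∀ c u v : ℝ, 0 < c → 0 < u → 0 ≤ v →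
      (2*c*v - u*v - v^2)/c^2 ≤ min 1 (v/u) := by
    intro c u v hc hu hv
    rcases le_total (v/u) 1 with h | h
    · rw [min_eq_right h]
      rw [div_le_div_iff₀ (pow_pos hc 2) hu]
      nlinarith [mul_nonneg hv (sq_nonneg (c - u)), mul_nonneg hu.le (sq_nonneg v)]
    · rw [min_eq_left h]
      rw [div_le_one (pow_pos hc 2)]
      nlinarith [sq_nonneg (c - v), mul_nonneg hu.le hv]
  -- lower bound computation for fixed u > 0
  have hlow : ∀ u : ℝ, 0 < u → ∀ c : ℝ, 0 < c →
      (2*c - u - sbar)/c^2 ≤ ∫ v, min 1 (v/u) ∂Q := by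
    intro u hu c hc
    have hInt1 : Integrable (fun v : ℝ => ((2*c - u)/c^2) * v - (1/c^2) * v^2) Q :=
      (hint.const_mul _).sub (hint2.const_mul _)
    have hle : ∀ᵐ v ∂Q, ((2*c - u)/c^2) * v - (1/c^2) * v^2 ≤ min 1 (v/u) := by
      filter_upwards [hpos] with v hv
      have := hkey c u v hc hu hv
      have he : ((2*c - u)/c^2) * v - (1/c^2) * v^2 = (2*c*v - u*v - v^2)/c^2 := by
        field_simp
      linarith [he ▸ this]
    have := integral_mono_ae hInt1 (hIntmin u hu.le) hle
    rwa [integral_sub (hint.const_mul _) (hint2.const_mul _), integral_const_mul _ _,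
      integral_const_mul _ _, hmean, ← hs, mul_one,
      show (2*c - u)/c^2 - 1/c^2 * sbar = (2*c - u - sbar)/c^2 by field_simp] at this
  constructor
  · intro u hu
    refine ⟨?_, ?_⟩
    · have hc : (0:ℝ) < sbar + u := by linarith
      have := hlow u hu (sbar + u) hc
      have he : (2*(sbar+u) - u - sbar)/(sbar+u)^2 = 1/(sbar+u) := by
        field_simp; ring
      linarith [he ▸ this]
    · refine le_min ?_ ?_
      · have := integral_mono_ae (hIntmin u hu.le) (integrable_const 1)
          (ae_of_all _ fun v => min_le_left _ _)
        simpa using this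
      · have := integral_mono_ae (hIntmin u hu.le) (hint.div_const u)
          (ae_of_all _ fun v => min_le_right _ _)
        rwa [integral_div, hmean] at this
  · -- part 2
    set c := 2 * sbar with hcdef
    have hc : (0:ℝ) < c := by positivity
    -- inner a.e. bound
    have hinner : ∀ᵐ u ∂Q, ((2*c - sbar)/c^2) * u - (1/c^2) * u^2
        ≤ u * ∫ v, min 1 (v/u) ∂Q := by
      filter_upwards [hpos] with u hu
      rcases eq_or_lt_of_le hu with h0 | hu'
      · simp [← h0]
      · have hInt1 : Integrable (fun v : ℝ => ((2*c*u - u^2)/c^2) * v - (u/c^2) * v^2) Q :=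
          (hint.const_mul _).sub (hint2.const_mul _)
        have hle : ∀ᵐ v ∂Q, ((2*c*u - u^2)/c^2) * v - (u/c^2) * v^2
            ≤ u * min 1 (v/u) := by
          filter_upwards [hpos] with v hv
          have h1 := hkey c u v hc hu' hv
          have h2 : u * ((2*c*v - u*v - v^2)/c^2) ≤ u * min 1 (v/u) :=
            mul_le_mul_of_nonneg_left h1 hu
          have he : ((2*c*u - u^2)/c^2) * v - (u/c^2) * v^2
              = u * ((2*c*v - u*v - v^2)/c^2) := by field_simp
          linarith [he ▸ h2]
        have hmono := integral_mono_ae hInt1 ((hIntmin u hu).const_mul u) hle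
        rw [integral_sub (hint.const_mul _) (hint2.const_mul _), integral_const_mul _ _,
          integral_const_mul _ _, hmean, ← hs, mul_one, integral_const_mul _ _] at hmono
        have he2 : ((2*c - sbar)/c^2) * u - (1/c^2) * u^2
            = (2*c*u - u^2)/c^2 - u/c^2 * sbar := by field_simp; ring
        linarith [he2 ▸ hmono]
    -- integrability of u * rho(u)
    have hsm : StronglyMeasurable fun p : ℝ × ℝ => min 1 (p.2 / p.1) :=
      (measurable_const.min (measurable_snd.div measurable_fst)).stronglyMeasurable
    have hmeas2 : AEStronglyMeasurable (fun u => u * ∫ v, min 1 (v/u) ∂Q) Q := by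
      exact (measurable_id.stronglyMeasurable.mul hsm.integral_prod_right').aestronglyMeasurable
    have hIntU : Integrable (fun u => u * ∫ v, min 1 (v/u) ∂Q) Q := by
      refine Integrable.mono' hint.abs hmeas2 ?_
      filter_upwards [hpos] with u hu
      rw [norm_mul, Real.norm_eq_abs, Real.norm_eq_abs]
      calc |u| * |∫ v, min 1 (v/u) ∂Q| ≤ |u| * 1 :=
            mul_le_mul_of_nonneg_left (hrho01 u hu) (abs_nonneg u)
        _ = |u| := mul_one _
    have hInt1 : Integrable (fun u : ℝ => ((2*c - sbar)/c^2) * u - (1/c^2) * u^2) Q :=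
      (hint.const_mul _).sub (hint2.const_mul _)
    have hmono := integral_mono_ae hInt1 hIntU hinner
    rw [integral_sub (hint.const_mul _) (hint2.const_mul _), integral_const_mul _ _,
      integral_const_mul _ _, hmean, ← hs, mul_one] at hmono
    have he : (2*c - sbar)/c^2 - 1/c^2 * sbar = 1/c := by
      rw [hcdef]; field_simp; ring
    linarith [he ▸ hmono]
end

section
/- Let X be the ergodic π-reversible IMH chain with stationary initial distribution, and suppose f ∈ L¹₀(E, π) \ L²₀(E, π). Then the asymptotic variance var(f, P) = lim_n n·var(n⁻¹ Σ_{i=1}^n f(X_i)) is infinite; specifically, for each n, var(n⁻¹ Σ_{i=1}^n f(X_i)) ≥ n⁻² μ(C)^{n−1} π(1_C · f²) = ∞, where C is either {f ≥ 0} or {f ≤ 0} chosen so that π(1_C · f²) = ∞. -/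
open MeasureTheory ProbabilityTheory ENNReal

/-- The finite-dimensional laws of a Markov chain with initial distribution `π` and
transition kernel `P` (given as a measure-valued map): `chainLaw π P n` is the law of
`(X_1, …, X_{n+1})`. -/
noncomputable def chainLaw {E : Type*} [MeasurableSpace E] (π : Measure E)
    (P : E → Measure E) : (n : ℕ) → Measure (Fin (n + 1) → E)
  | 0 => π.map (fun x => fun _ => x)
  | (n + 1) => (chainLaw π P n).bind
      (fun v => (P (v (Fin.last n))).map (fun y => Fin.snoc v y))

set_option linter.unusedSectionVars false

section Aux

variable {E : Type*} [MeasurableSpace E]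

lemma aux_ofReal_integral (μ : Measure E) [IsProbabilityMeasure μ]
    (w : E → ℝ) (hwm : Measurable w) (hw : ∀ x, 0 < w x) (x : E) :
    ENNReal.ofReal (∫ y, min 1 (w y / w x) ∂μ)
      = ∫⁻ y, ENNReal.ofReal (min 1 (w y / w x)) ∂μ := by
  have hmeas : Measurable fun y => min 1 (w y / w x) :=
    (measurable_const.min (hwm.div_const _))
  have hint : Integrable (fun y => min 1 (w y / w x)) μ := by
    refine (integrable_const (1 : ℝ)).mono hmeas.aestronglyMeasurable ?_
    filter_upwards with y
    have h1 : 0 < min 1 (w y / w x) :=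
      lt_min one_pos (div_pos (hw y) (hw x))
    have h2 : min 1 (w y / w x) ≤ 1 := min_le_left _ _
    simp [Real.norm_eq_abs, abs_of_pos h1, h2]
  exact ofReal_integral_eq_lintegral_ofReal hint
    (Filter.Eventually.of_forall fun y => (lt_min one_pos (div_pos (hw y) (hw x))).le)

variable (μ : Measure E) [IsProbabilityMeasure μ]
    (w : E → ℝ) (hwm : Measurable w) (hw : ∀ x, 0 < w x)
    (P : E → Measure E)
    (hP : ∀ x, P x = μ.withDensity (fun y => ENNReal.ofReal (min 1 (w y / w x)))
        + (1 - ENNReal.ofReal (∫ y, min 1 (w y / w x) ∂μ)) • Measure.dirac x)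

lemma aux_d_le_one (x y : E) : ENNReal.ofReal (min 1 (w y / w x)) ≤ 1 := by
  calc ENNReal.ofReal (min 1 (w y / w x)) ≤ ENNReal.ofReal 1 :=
        ENNReal.ofReal_le_ofReal (min_le_left _ _)
    _ = 1 := ENNReal.ofReal_one

include hP hwm hw in
lemma aux_P_apply (x : E) {C : Set E} (hC : MeasurableSet C) :
    P x C = (∫⁻ y in C, ENNReal.ofReal (min 1 (w y / w x)) ∂μ)
      + (1 - ∫⁻ y, ENNReal.ofReal (min 1 (w y / w x)) ∂μ) * (C.indicator 1 x) := by
  rw [hP x]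
  rw [Measure.add_apply, Measure.smul_apply, withDensity_apply _ hC,
    Measure.dirac_apply' _ hC, aux_ofReal_integral μ w hwm hw x, smul_eq_mul]

include hP hwm hw in
lemma aux_P_univ_le (x : E) : P x Set.univ ≤ 2 := by
  rw [aux_P_apply μ w hwm hw P hP x MeasurableSet.univ]
  have h1 : (∫⁻ y in Set.univ, ENNReal.ofReal (min 1 (w y / w x)) ∂μ) ≤ 1 := by
    rw [Measure.restrict_univ]
    calc ∫⁻ y, ENNReal.ofReal (min 1 (w y / w x)) ∂μ ≤ ∫⁻ _, 1 ∂μ :=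
          lintegral_mono fun y => aux_d_le_one w x y
      _ = 1 := by simp
  have hind : (Set.univ.indicator (1 : E → ℝ≥0∞) x) = 1 := by simp
  rw [hind, mul_one]
  refine le_trans (add_le_add h1 tsub_le_self) (by norm_num)

include hP hwm hw in
lemma aux_P_ge (x : E) {C : Set E} (hC : MeasurableSet C) (hx : x ∈ C) :
    μ C ≤ P x C := by
  rw [aux_P_apply μ w hwm hw P hP x hC]
  set d : E → ℝ≥0∞ := fun y => ENNReal.ofReal (min 1 (w y / w x)) with hd
  have hdm : Measurable d := (measurable_const.min (hwm.div_const _)).ennreal_ofReal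
  set A := ∫⁻ y in C, d y ∂μ with hA
  set B := ∫⁻ y in Cᶜ, d y ∂μ with hB
  have hsplit : (∫⁻ y, d y ∂μ) = A + B := (lintegral_add_compl _ hC).symm
  have hAle : A ≤ μ C := by
    calc A ≤ ∫⁻ _ in C, 1 ∂μ := lintegral_mono fun y => aux_d_le_one w x y
      _ = μ C := by simp
  have hBle : B ≤ μ Cᶜ := by
    calc B ≤ ∫⁻ _ in Cᶜ, 1 ∂μ := lintegral_mono fun y => aux_d_le_one w x y
      _ = μ Cᶜ := by simp
  have hAB : A + B ≤ 1 := by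
    rw [← hsplit]
    calc (∫⁻ y, d y ∂μ) ≤ ∫⁻ _, 1 ∂μ := lintegral_mono fun y => aux_d_le_one w x y
      _ = 1 := by simp
  have hBne : B ≠ ⊤ := (lt_of_le_of_lt hBle (measure_lt_top μ _)).ne
  have hind : (C.indicator (1 : E → ℝ≥0∞) x) = 1 := by simp [Set.indicator, hx]
  rw [hsplit, hind, mul_one]
  have h1 : 1 - (A + B) = (1 - B) - A := by
    rw [add_comm, tsub_add_eq_tsub_tsub]
  have h2 : A ≤ 1 - B := by
    refine ENNReal.le_sub_of_add_le_right hBne ?_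
    exact hAB
  rw [h1, add_comm, tsub_add_cancel_of_le h2]
  have h3 : μ C = 1 - μ Cᶜ := by
    rw [← prob_compl_eq_one_sub hC.compl, compl_compl]
  rw [h3]
  exact tsub_le_tsub_left hBle 1

include hP hwm hw in
lemma aux_P_meas : Measurable P := by
  apply Measure.measurable_of_measurable_coe
  intro s hs
  have heq : ∀ x, P x s = (∫⁻ y, s.indicator (fun y => ENNReal.ofReal (min 1 (w y / w x))) y ∂μ)
      + (1 - ∫⁻ y, ENNReal.ofReal (min 1 (w y / w x)) ∂μ) * (s.indicator 1 x) := by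
    intro x
    rw [aux_P_apply μ w hwm hw P hP x hs, lintegral_indicator hs]
  simp_rw [heq]
  have hjoint : Measurable fun p : E × E => ENNReal.ofReal (min 1 (w p.2 / w p.1)) :=
    (measurable_const.min ((hwm.comp measurable_snd).div (hwm.comp measurable_fst))).ennreal_ofReal
  have h1 : Measurable fun x => ∫⁻ y, s.indicator (fun y => ENNReal.ofReal (min 1 (w y / w x))) y ∂μ := by
    apply Measurable.lintegral_prod_right' (f := fun p : E × E =>
      s.indicator (fun y => ENNReal.ofReal (min 1 (w y / w p.1))) p.2)
    have : Measurable fun p : E × E =>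
        s.indicator (fun y => ENNReal.ofReal (min 1 (w y / w p.1))) p.2 := by
      have hset : MeasurableSet {p : E × E | p.2 ∈ s} := measurable_snd hs
      have : (fun p : E × E => s.indicator (fun y => ENNReal.ofReal (min 1 (w y / w p.1))) p.2)
          = {p : E × E | p.2 ∈ s}.indicator (fun p => ENNReal.ofReal (min 1 (w p.2 / w p.1))) := by
        ext p
        by_cases h : p.2 ∈ s <;> simp [Set.indicator, h]
      rw [this]
      exact hjoint.indicator hset
    exact this
  have h2 : Measurable fun x => (1 - ∫⁻ y, ENNReal.ofReal (min 1 (w y / w x)) ∂μ) * (s.indicator 1 x) := by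
    refine Measurable.mul ?_ (measurable_one.indicator hs)
    exact Measurable.const_sub (Measurable.lintegral_prod_right' hjoint) 1
  exact h1.add h2

lemma aux_snoc_meas (m : ℕ) :
    Measurable fun p : (Fin (m + 1) → E) × E => (Fin.snoc p.1 p.2 : Fin (m + 2) → E) := by
  apply measurable_pi_lambda
  intro i
  induction i using Fin.lastCases with
  | last => simpa [Fin.snoc_last] using (measurable_snd : Measurable fun p : (Fin (m+1) → E) × E => p.2)
  | cast j =>
    simp only [Fin.snoc_castSucc]
    exact (measurable_pi_apply j).comp
      (measurable_fst : Measurable fun p : (Fin (m+1) → E) × E => p.1)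

lemma aux_step_meas (P : E → Measure E) (hPm : Measurable P)
    (hPfin : ∀ x, P x Set.univ ≤ 2) (m : ℕ) :
    Measurable fun v : Fin (m + 1) → E =>
      (P (v (Fin.last m))).map (fun y => (Fin.snoc v y : Fin (m + 2) → E)) := by
  apply Measure.measurable_of_measurable_coe
  intro s hs
  have hsnoc : ∀ v : Fin (m+1) → E, Measurable (fun y => (Fin.snoc v y : Fin (m+2) → E)) :=
    fun v => (aux_snoc_meas m).comp (measurable_const.prodMk measurable_id)
  have heq : (fun v : Fin (m+1) → E =>
      ((P (v (Fin.last m))).map (fun y => (Fin.snoc v y : Fin (m+2) → E))) s)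
      = fun v => P (v (Fin.last m)) ((fun y => (Fin.snoc v y : Fin (m+2) → E)) ⁻¹' s) :=
    funext fun v => Measure.map_apply (hsnoc v) hs
  rw [heq]
  let κ : ProbabilityTheory.Kernel E E := ⟨P, hPm⟩
  have : ProbabilityTheory.IsFiniteKernel κ :=
    ⟨⟨2, by norm_num, fun x => hPfin x⟩⟩
  let κ' := κ.comap (fun v : Fin (m+1) → E => v (Fin.last m)) (measurable_pi_apply _)
  have ht : MeasurableSet {p : (Fin (m+1) → E) × E | (Fin.snoc p.1 p.2 : Fin (m+2) → E) ∈ s} :=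
    aux_snoc_meas m hs
  have := ProbabilityTheory.Kernel.measurable_kernel_prodMk_left (κ := κ') ht
  convert this using 2 with v
  rfl

lemma aux_snoc_mem_iff (m : ℕ) (C : Set E) (v : Fin (m+1) → E) (y : E) :
    (∀ i : Fin (m+2), (Fin.snoc v y : Fin (m+2) → E) i ∈ C) ↔ ((∀ i, v i ∈ C) ∧ y ∈ C) := by
  constructor
  · intro h
    refine ⟨fun i => ?_, ?_⟩
    · have := h i.castSucc
      rwa [Fin.snoc_castSucc] at this
    · have := h (Fin.last (m+1))
      rwa [Fin.snoc_last] at this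
  · rintro ⟨h1, h2⟩ i
    induction i using Fin.lastCases with
    | last => rwa [Fin.snoc_last]
    | cast j => rw [Fin.snoc_castSucc]; exact h1 j

lemma aux_chain_lb (π : Measure E) [IsProbabilityMeasure π]
    (P : E → Measure E) (hPm : Measurable P) (hPfin : ∀ x, P x Set.univ ≤ 2)
    {C : Set E} (hC : MeasurableSet C) (hPC : ∀ x ∈ C, μ C ≤ P x C)
    (g : E → ℝ≥0∞) (hg : Measurable g) : ∀ m : ℕ,
    μ C ^ m * ∫⁻ x in C, g x ∂π ≤
      ∫⁻ v, ({v : Fin (m+1) → E | ∀ i, v i ∈ C}.indicator (fun v => g (v 0))) v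
        ∂(chainLaw π P m) := by
  have hSm : ∀ m : ℕ, MeasurableSet {v : Fin (m+1) → E | ∀ i, v i ∈ C} := by
    intro m
    have : {v : Fin (m+1) → E | ∀ i, v i ∈ C} = ⋂ i, (fun v => v i) ⁻¹' C := by
      ext v; simp [Set.mem_iInter]
    rw [this]
    exact MeasurableSet.iInter fun i => (measurable_pi_apply i) hC
  have hFm : ∀ m : ℕ, Measurable ({v : Fin (m+1) → E | ∀ i, v i ∈ C}.indicator
      (fun v => g (v 0))) :=
    fun m => (hg.comp (measurable_pi_apply 0)).indicator (hSm m)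
  intro m
  induction m with
  | zero =>
    rw [pow_zero, one_mul, chainLaw]
    have hmap : Measurable (fun x : E => (fun _ : Fin 1 => x)) :=
      measurable_pi_lambda _ fun _ => measurable_id
    rw [lintegral_map (hFm 0) hmap]
    have : ∀ x : E, ({v : Fin 1 → E | ∀ i, v i ∈ C}.indicator (fun v => g (v 0)))
        (fun _ => x) = C.indicator g x := by
      intro x
      by_cases h : x ∈ C <;> simp [Set.indicator, h]
    simp_rw [this]
    rw [lintegral_indicator hC]
  | succ m ih =>
    rw [chainLaw, Measure.lintegral_bind (aux_step_meas P hPm hPfin m).aemeasurable (hFm (m+1)).aemeasurable]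
    have hinner : ∀ v : Fin (m+1) → E,
        ({v : Fin (m+1) → E | ∀ i, v i ∈ C}.indicator
          (fun v => μ C * g (v 0))) v
        ≤ ∫⁻ z, ({u : Fin (m+2) → E | ∀ i, u i ∈ C}.indicator (fun u => g (u 0))) z
            ∂((P (v (Fin.last m))).map (fun y => Fin.snoc v y)) := by
      intro v
      have hsnocv : Measurable (fun y : E => (Fin.snoc v y : Fin (m+2) → E)) :=
        (aux_snoc_meas m).comp (measurable_const.prodMk measurable_id)
      rw [lintegral_map (hFm (m+1)) hsnocv]
      by_cases hv : ∀ i, v i ∈ C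
      · have h0 : ∀ y : E, ((Fin.snoc v y : Fin (m+2) → E) 0) = v 0 := by
          intro y
          have : (0 : Fin (m+2)) = Fin.castSucc (0 : Fin (m+1)) := rfl
          rw [this, Fin.snoc_castSucc]
        have heq : ∀ y : E, ({u : Fin (m+2) → E | ∀ i, u i ∈ C}.indicator
            (fun u => g (u 0))) (Fin.snoc v y) = C.indicator (fun _ => g (v 0)) y := by
          intro y
          by_cases hy : y ∈ C
          · simp only [Set.indicator, Set.mem_setOf_eq, aux_snoc_mem_iff m C v y, hv, hy,
              and_true, if_true, h0 y]
            simp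
          · simp only [Set.indicator, Set.mem_setOf_eq, aux_snoc_mem_iff m C v y, hv, hy,
              and_false, if_false]
        simp_rw [heq]
        rw [lintegral_indicator hC, setLIntegral_const,
          Set.indicator_of_mem (show v ∈ {v : Fin (m+1) → E | ∀ i, v i ∈ C} from hv)]
        rw [mul_comm (μ C) (g (v 0))]
        exact mul_le_mul_right (hPC _ (hv (Fin.last m))) _
      · rw [Set.indicator_of_notMem (show v ∉ {v : Fin (m+1) → E | ∀ i, v i ∈ C} from hv)]
        exact zero_le
    calc μ C ^ (m+1) * ∫⁻ x in C, g x ∂π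
        = μ C * (μ C ^ m * ∫⁻ x in C, g x ∂π) := by ring
      _ ≤ μ C * ∫⁻ v, ({v : Fin (m+1) → E | ∀ i, v i ∈ C}.indicator (fun v => g (v 0))) v
            ∂(chainLaw π P m) := mul_le_mul_right ih _
      _ = ∫⁻ v, ({v : Fin (m+1) → E | ∀ i, v i ∈ C}.indicator (fun v => μ C * g (v 0))) v
            ∂(chainLaw π P m) := by
          rw [← lintegral_const_mul _ (hFm m)]
          congr 1
          ext v
          by_cases hv : v ∈ {v : Fin (m+1) → E | ∀ i, v i ∈ C} <;>
            simp [Set.indicator, hv]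
      _ ≤ _ := lintegral_mono fun v => hinner v

lemma aux_sq_le_nonneg {n : ℕ} (g : Fin (n + 1) → ℝ) (h : ∀ i, 0 ≤ g i) :
    g 0 ^ 2 ≤ (∑ i, g i) ^ 2 := by
  have h1 : g 0 ≤ ∑ i, g i :=
    Finset.single_le_sum (fun i _ => h i) (Finset.mem_univ 0)
  exact pow_le_pow_left₀ (h 0) h1 2

lemma aux_sq_le {n : ℕ} (g : Fin (n + 1) → ℝ) (h : (∀ i, 0 ≤ g i) ∨ (∀ i, g i ≤ 0)) :
    g 0 ^ 2 ≤ (∑ i, g i) ^ 2 := by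
  rcases h with h | h
  · exact aux_sq_le_nonneg g h
  · have := aux_sq_le_nonneg (fun i => -g i) (fun i => neg_nonneg.mpr (h i))
    simpa [Finset.sum_neg_distrib, neg_pow] using this


end Aux

/-- Let `(X_n)` be the stationary independent Metropolis–Hastings chain with target `π`,
proposal `μ` and `w = dπ/dμ`, and let `f ∈ L¹₀(E, π) \ L²₀(E, π)`. Then there is a set `C`,
either `{f ≥ 0}` or `{f ≤ 0}`, with `π(1_C·f²) = ∞`, such that for each `n ≥ 1` the
variance of the ergodic average satisfies
`var(n⁻¹ Σ_{i=1}^n f(X_i)) ≥ n⁻² μ(C)^{n−1} π(1_C·f²) = ∞`; in particular all these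
variances (and hence the asymptotic variance) are infinite. -/
theorem stmt17 {E Ω : Type*} [MeasurableSpace E] [MeasurableSpace Ω]
    (Pr : Measure Ω) [IsProbabilityMeasure Pr]
    (μ π : Measure E) [IsProbabilityMeasure μ] [IsProbabilityMeasure π]
    (w : E → ℝ) (hwm : Measurable w) (hw : ∀ x, 0 < w x)
    (hdens : π = μ.withDensity (fun x => ENNReal.ofReal (w x)))
    (f : E → ℝ) (hfm : Measurable f) (hfint : Integrable f π) (hf0 : ∫ x, f x ∂π = 0)
    (hf2 : ∫⁻ x, ENNReal.ofReal (f x ^ 2) ∂π = ⊤)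
    (P : E → Measure E)
    (hP : ∀ x, P x = μ.withDensity (fun y => ENNReal.ofReal (min 1 (w y / w x)))
        + (1 - ENNReal.ofReal (∫ y, min 1 (w y / w x) ∂μ)) • Measure.dirac x)
    (X : ℕ → Ω → E) (hXm : ∀ n, Measurable (X n))
    (hchain : ∀ n : ℕ,
      Measure.map (fun ω => fun i : Fin (n + 1) => X i ω) Pr = chainLaw π P n) :
    ∃ C : Set E, (C = {x | 0 ≤ f x} ∨ C = {x | f x ≤ 0}) ∧
      (∫⁻ x in C, ENNReal.ofReal (f x ^ 2) ∂π = ⊤) ∧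
      ∀ n : ℕ, 1 ≤ n →
        ENNReal.ofReal (((n : ℝ)⁻¹) ^ 2) * (μ C) ^ (n - 1) *
            ∫⁻ x in C, ENNReal.ofReal (f x ^ 2) ∂π
          ≤ evariance (fun ω => (n : ℝ)⁻¹ * ∑ i ∈ Finset.range n, f (X i ω)) Pr ∧
        evariance (fun ω => (n : ℝ)⁻¹ * ∑ i ∈ Finset.range n, f (X i ω)) Pr = ⊤ := by
  -- choose the set C
  have hsq : Measurable fun x => ENNReal.ofReal (f x ^ 2) := (hfm.pow_const 2).ennreal_ofReal
  have hCplus : MeasurableSet {x | 0 ≤ f x} := measurableSet_le measurable_const hfm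
  have hCminus : MeasurableSet {x | f x ≤ 0} := measurableSet_le hfm measurable_const
  have hunion : ({x | 0 ≤ f x} ∪ {x | f x ≤ 0}) = Set.univ := by
    ext x; simp [le_total 0 (f x)]
  have htot : (∫⁻ x in {x | 0 ≤ f x}, ENNReal.ofReal (f x ^ 2) ∂π)
      + (∫⁻ x in {x | f x ≤ 0}, ENNReal.ofReal (f x ^ 2) ∂π) = ⊤ := by
    refine top_le_iff.mp ?_
    rw [← hf2, ← setLIntegral_univ, ← hunion]
    exact lintegral_union_le _ _ _
  obtain ⟨C, hCor, hC, hCtop⟩ :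
      ∃ C : Set E, (C = {x | 0 ≤ f x} ∨ C = {x | f x ≤ 0}) ∧ MeasurableSet C ∧
        (∫⁻ x in C, ENNReal.ofReal (f x ^ 2) ∂π = ⊤) := by
    rcases ENNReal.add_eq_top.mp htot with h | h
    · exact ⟨_, Or.inl rfl, hCplus, h⟩
    · exact ⟨_, Or.inr rfl, hCminus, h⟩
  -- μ C ≠ 0
  have hμC : μ C ≠ 0 := by
    intro h0
    have hπC : π C = 0 := by
      rw [hdens, withDensity_apply _ hC]
      exact le_antisymm (by
        calc ∫⁻ x in C, ENNReal.ofReal (w x) ∂μ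
            ≤ ∫⁻ x in C, ⊤ ∂μ := lintegral_mono fun x => le_top
          _ = ⊤ * μ C := by rw [setLIntegral_const]
          _ = 0 := by rw [h0, mul_zero]) zero_le
    rw [setLIntegral_measure_zero _ _ hπC] at hCtop
    exact (ENNReal.zero_ne_top) hCtop
  have hPmeas : Measurable P := aux_P_meas μ w hwm hw P hP
  have hPfin : ∀ x, P x Set.univ ≤ 2 := aux_P_univ_le μ w hwm hw P hP
  have hPC : ∀ x ∈ C, μ C ≤ P x C := fun x hx => aux_P_ge μ w hwm hw P hP x hC hx
  refine ⟨C, hCor, hCtop, ?_⟩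
  intro n hn
  obtain ⟨m, rfl⟩ : ∃ m, n = m + 1 := ⟨n - 1, (Nat.succ_pred_eq_of_pos hn).symm⟩
  set c : ℝ := ((m + 1 : ℕ) : ℝ)⁻¹ with hc
  have hcpos : 0 < c := by positivity
  set S : Ω → ℝ := fun ω => ∑ i ∈ Finset.range (m + 1), f (X i ω) with hS
  have hSm' : Measurable S := Finset.measurable_sum _ fun i _ => hfm.comp (hXm i)
  -- the key lower bound
  have hT : ∫⁻ ω, ENNReal.ofReal (S ω ^ 2) ∂Pr = ⊤ := by
    have hkey := aux_chain_lb μ π P hPmeas hPfin hC hPC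
      (fun x => ENNReal.ofReal (f x ^ 2)) hsq m
    have hXmap : Measurable fun ω => fun i : Fin (m + 1) => X i ω :=
      measurable_pi_lambda _ fun i => hXm i
    have hSmSet : MeasurableSet {v : Fin (m+1) → E | ∀ i, v i ∈ C} := by
      have : {v : Fin (m+1) → E | ∀ i, v i ∈ C} = ⋂ i, (fun v => v i) ⁻¹' C := by
        ext v; simp [Set.mem_iInter]
      rw [this]
      exact MeasurableSet.iInter fun i => (measurable_pi_apply i) hC
    have hF : Measurable ({v : Fin (m+1) → E | ∀ i, v i ∈ C}.indicator
        (fun v => ENNReal.ofReal (f (v 0) ^ 2))) :=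
      (hsq.comp (measurable_pi_apply 0)).indicator hSmSet
    rw [← hchain m, lintegral_map hF hXmap] at hkey
    have hkeytop : (∫⁻ ω, ({v : Fin (m+1) → E | ∀ i, v i ∈ C}.indicator
        (fun v => ENNReal.ofReal (f (v 0) ^ 2))) (fun i => X i ω) ∂Pr) = ⊤ := by
      refine top_le_iff.mp ?_
      refine le_trans (le_of_eq ?_) hkey
      exact (ENNReal.mul_eq_top.mpr (Or.inl ⟨pow_ne_zero m hμC, hCtop⟩)).symm
    refine top_le_iff.mp ?_
    rw [← hkeytop]
    refine lintegral_mono fun ω => ?_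
    by_cases hω : ∀ i : Fin (m + 1), X i ω ∈ C
    · rw [Set.indicator_of_mem (show (fun i : Fin (m+1) => X i ω) ∈
        {v : Fin (m+1) → E | ∀ i, v i ∈ C} from hω)]
      refine ENNReal.ofReal_le_ofReal ?_
      have hsum : S ω = ∑ i : Fin (m + 1), f (X i ω) :=
        (Fin.sum_univ_eq_sum_range (fun i => f (X i ω)) (m + 1)).symm
      rw [hsum]
      refine aux_sq_le (fun i : Fin (m+1) => f (X i ω)) ?_
      rcases hCor with h | h
      · exact Or.inl fun i => by have := hω i; rw [h] at this; exact this
      · exact Or.inr fun i => by have := hω i; rw [h] at this; exact this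
    · rw [Set.indicator_of_notMem (show (fun i : Fin (m+1) => X i ω) ∉
        {v : Fin (m+1) → E | ∀ i, v i ∈ C} from hω)]
      exact zero_le
  -- variance is infinite
  have hgm : Measurable fun ω => c * S ω := hSm'.const_mul c
  have hvar : evariance (fun ω => c * S ω) Pr = ⊤ := by
    refine evariance_eq_top hgm.aestronglyMeasurable ?_
    intro hMem
    rw [memLp_two_iff_integrable_sq hgm.aestronglyMeasurable] at hMem
    have hfin := hMem.2
    rw [HasFiniteIntegral] at hfin
    have heq : ∀ ω, ‖(c * S ω) ^ 2‖ₑ = ENNReal.ofReal (c ^ 2) *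
        ENNReal.ofReal (S ω ^ 2) := by
      intro ω
      rw [Real.enorm_eq_ofReal (sq_nonneg (c * S ω)), mul_pow,
        ENNReal.ofReal_mul (sq_nonneg c)]
    simp_rw [heq] at hfin
    rw [lintegral_const_mul _ ((hSm'.pow_const 2).ennreal_ofReal), hT,
      ENNReal.mul_top (by simp [ENNReal.ofReal_eq_zero, not_le, pow_pos hcpos, hcpos.ne'])] at hfin
    exact absurd hfin (lt_irrefl ⊤)
  constructor
  · rw [hvar]; exact le_top
  · exact hvar
end
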